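/- arXiv:math/0508398 — 3 statements merged into one kernel-verified Lean document; each statement's English description precedes it below -/
import Mathlib

section
/- In the Setup, assume additionally that A and A* satisfy the cubic q-Serre relations. Let W be a nonzero subspace of V with AW ⊆ W and A*W ⊆ W, such that the only subspaces W' ⊆ W with AW' ⊆ W' and A*W' ⊆ W' are 0 and W. Let r = min{i : 0 ≤ i ≤ d, E_iW ≠ 0}. Then for every v ∈ E_rW, the vector u := F_r v satisfies Lu = 0. -/
noncomputable section

/-- `[n]_q = (qⁿ − q⁻ⁿ)/(q − q⁻¹)`. -/
def qInt {K : Type*} [Field K] (q : K) (n : ℕ) : K :=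
  (q ^ n - q⁻¹ ^ n) / (q - q⁻¹)

/-- `[n]_q! = [n]_q [n−1]_q ⋯ [1]_q`. -/
def qFac {K : Type*} [Field K] (q : K) (n : ℕ) : K :=
  ∏ k ∈ Finset.range n, qInt q (k + 1)

/-- `X, Y` satisfy the cubic `q`-Serre relations. -/
def QSerre {K V : Type*} [Field K] [AddCommGroup V] [Module K V]
    (q : K) (X Y : Module.End K V) : Prop :=
  X ^ 3 * Y - qInt q 3 • (X ^ 2 * Y * X) + qInt q 3 • (X * Y * X ^ 2) - Y * X ^ 3 = 0 ∧
  Y ^ 3 * X - qInt q 3 • (Y ^ 2 * X * Y) + qInt q 3 • (Y * X * Y ^ 2) - X * Y ^ 3 = 0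

/-- `U 0, …, U d` is a decomposition of `V` with diameter `d`: the `U i` with `i ≤ d` are nonzero,
`U i = 0` for `i > d`, and `V` is the (internal) direct sum of the `U i`. -/
def IsDecomposition {K V : Type*} [Field K] [AddCommGroup V] [Module K V]
    (d : ℕ) (U : ℕ → Submodule K V) : Prop :=
  (∀ i, i ≤ d → U i ≠ ⊥) ∧ (∀ i, d < i → U i = ⊥) ∧
  (⨆ i, U i) = ⊤ ∧
  ∀ i, Disjoint (U i) (⨆ j, ⨆ _ : j ≠ i, U j)

/-- The Setup: `U 0, …, U d` is a decomposition of `V`; `R` is a raising map, `L` a lowering map,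
and `A` (resp. `As`) acts on `U i` as `R + q^{2i−d}` (resp. `L + q^{d−2i}`). -/
def TDSetup {K V : Type*} [Field K] [AddCommGroup V] [Module K V]
    (q : K) (d : ℕ) (U : ℕ → Submodule K V) (R L A As : Module.End K V) : Prop :=
  IsDecomposition d U ∧
  (∀ i, Submodule.map R (U i) ≤ U (i + 1)) ∧
  (∀ i, Submodule.map L (U (i + 1)) ≤ U i) ∧
  (∀ u ∈ U 0, L u = 0) ∧
  (∀ i, ∀ u ∈ U i, A u = R u + q ^ (2 * (i : ℤ) - d) • u) ∧
  (∀ i, ∀ u ∈ U i, As u = L u + q ^ ((d : ℤ) - 2 * (i : ℤ)) • u)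

/-- `E i` is, for each `i`, the projection onto `P i` determined by the decomposition of `V` into
the subspaces `P j`: it is the identity on `P i` and zero on each `P j` with `j ≠ i`. -/
def IsProjFamily {K V : Type*} [Field K] [AddCommGroup V] [Module K V]
    (P : ℕ → Submodule K V) (E : ℕ → Module.End K V) : Prop :=
  ∀ i, (∀ v ∈ P i, E i v = v) ∧ ∀ j, j ≠ i → ∀ v ∈ P j, E i v = 0

section Aux
variable {K : Type*} [Field K] {V : Type*} [AddCommGroup V] [Module K V]
variable (d : ℕ) (U : ℕ → Submodule K V) (F : ℕ → Module.End K V)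
variable (lam mu : ℕ → K) (R L A As : Module.End K V)

lemma aux_lam_inj (q : K) (hq : q ≠ 0) (hq1 : ∀ n : ℕ, 0 < n → q ^ n ≠ 1) (d : ℕ) :
    ∀ i j : ℕ, i ≠ j → q ^ (2*(i:ℤ)-(d:ℤ)) ≠ q ^ (2*(j:ℤ)-(d:ℤ)) := by
  have key : ∀ i j : ℕ, i < j → q ^ (2*(i:ℤ)-(d:ℤ)) ≠ q ^ (2*(j:ℤ)-(d:ℤ)) := by
    intro i j hij h
    have h2 : q ^ ((2*(j:ℤ)-(d:ℤ)) - (2*(i:ℤ)-(d:ℤ))) = 1 := by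
      rw [zpow_sub₀ hq, ← h, div_self (zpow_ne_zero _ hq)]
    have h3 : (2*(j:ℤ)-(d:ℤ)) - (2*(i:ℤ)-(d:ℤ)) = ((2*(j-i) : ℕ) : ℤ) := by
      push_cast [Nat.cast_sub hij.le]
      ring
    rw [h3, zpow_natCast] at h2
    exact hq1 _ (by omega) h2
  intro i j hij
  rcases lt_or_gt_of_ne hij with h | h
  · exact key i j h
  · exact (key j i h).symm

lemma aux_F_mem (d : ℕ) (U : ℕ → Submodule K V) (F : ℕ → Module.End K V)
    (hUtop : (⨆ i, U i) = ⊤) (hF : IsProjFamily U F) :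
    ∀ k v, F k v ∈ U k := by
  intro k v
  have hv : v ∈ ⨆ i, U i := by rw [hUtop]; trivial
  refine Submodule.iSup_induction (motive := fun v => F k v ∈ U k) U hv (fun i u hu => ?_)
    (by simp) (fun x y hx hy => ?_)
  · show F k u ∈ U k
    by_cases hik : i = k
    · subst hik; rw [(hF i).1 u hu]; exact hu
    · rw [(hF k).2 i hik u hu]; exact zero_mem _
  · show F k (x + y) ∈ U k
    rw [map_add]; exact add_mem hx hy

lemma aux_F_sum (d : ℕ) (U : ℕ → Submodule K V) (F : ℕ → Module.End K V)
    (hUtop : (⨆ i, U i) = ⊤) (hUbot : ∀ i, d < i → U i = ⊥) (hF : IsProjFamily U F) :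
    ∀ v : V, ∑ k ∈ Finset.range (d+1), F k v = v := by
  intro v
  have hv : v ∈ ⨆ i, U i := by rw [hUtop]; trivial
  refine Submodule.iSup_induction (motive := fun v => ∑ k ∈ Finset.range (d+1), F k v = v) U hv
    (fun i u hu => ?_) (by simp) (fun x y hx hy => ?_)
  · show ∑ k ∈ Finset.range (d+1), F k u = u
    by_cases hi : i ≤ d
    · rw [Finset.sum_eq_single_of_mem i (Finset.mem_range.mpr (by omega))
        (fun b _ hbi => (hF b).2 i (Ne.symm hbi) u hu)]
      exact (hF i).1 u hu
    · have : u = 0 := by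
        have := hUbot i (by omega)
        rw [this] at hu
        simpa using hu
      simp [this]
  · show ∑ k ∈ Finset.range (d+1), F k (x + y) = x + y
    simp only [map_add, Finset.sum_add_distrib]
    rw [hx, hy]


lemma aux_F0A (hUtop : (⨆ i, U i) = ⊤) (hF : IsProjFamily U F)
    (hR : ∀ i, Submodule.map R (U i) ≤ U (i + 1))
    (hA : ∀ i, ∀ u ∈ U i, A u = R u + lam i • u) :
    ∀ v : V, F 0 (A v) = lam 0 • F 0 v := by
  intro v
  have hv : v ∈ ⨆ i, U i := by rw [hUtop]; trivial
  refine Submodule.iSup_induction (motive := fun v => F 0 (A v) = lam 0 • F 0 v) U hv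
    (fun j u hu => ?_) (by simp) (fun x y hx hy => ?_)
  · show F 0 (A u) = lam 0 • F 0 u
    have hRu : R u ∈ U (j+1) := hR j (Submodule.mem_map_of_mem hu)
    rw [hA j u hu, map_add, map_smul, (hF 0).2 (j+1) (by omega) (R u) hRu, zero_add]
    by_cases hj : j = 0
    · subst hj; rfl
    · rw [(hF 0).2 j hj u hu]; simp
  · show F 0 (A (x+y)) = lam 0 • F 0 (x+y)
    simp only [map_add, smul_add, hx, hy]

lemma aux_FA (hUtop : (⨆ i, U i) = ⊤) (hF : IsProjFamily U F)
    (hR : ∀ i, Submodule.map R (U i) ≤ U (i + 1))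
    (hA : ∀ i, ∀ u ∈ U i, A u = R u + lam i • u) :
    ∀ (m : ℕ) (v : V), F (m+1) (A v) = lam (m+1) • F (m+1) v + R (F m v) := by
  intro m v
  have hv : v ∈ ⨆ i, U i := by rw [hUtop]; trivial
  refine Submodule.iSup_induction
    (motive := fun v => F (m+1) (A v) = lam (m+1) • F (m+1) v + R (F m v)) U hv
    (fun j u hu => ?_) (by simp) (fun x y hx hy => ?_)
  · show F (m+1) (A u) = lam (m+1) • F (m+1) u + R (F m u)
    have hRu : R u ∈ U (j+1) := hR j (Submodule.mem_map_of_mem hu)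
    rw [hA j u hu, map_add, map_smul]
    by_cases hj : j = m
    · subst hj
      rw [(hF (j+1)).1 (R u) hRu, (hF (j+1)).2 j (by omega) u hu, (hF j).1 u hu]
      simp
    · rw [(hF (m+1)).2 (j+1) (by omega) (R u) hRu, (hF m).2 j (by omega) u hu]
      by_cases hj2 : j = m+1
      · subst hj2; rw [(hF (m+1)).1 u hu]; simp
      · rw [(hF (m+1)).2 j hj2 u hu]; simp
  · show F (m+1) (A (x+y)) = lam (m+1) • F (m+1) (x+y) + R (F m (x+y))
    simp only [map_add, smul_add, hx, hy]
    abel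

lemma aux_FAs (hUtop : (⨆ i, U i) = ⊤) (hF : IsProjFamily U F)
    (hL : ∀ i, Submodule.map L (U (i + 1)) ≤ U i)
    (hL0 : ∀ u ∈ U 0, L u = 0)
    (hAs : ∀ i, ∀ u ∈ U i, As u = L u + mu i • u) :
    ∀ (m : ℕ) (v : V), F m (As v) = mu m • F m v + L (F (m+1) v) := by
  intro m v
  have hv : v ∈ ⨆ i, U i := by rw [hUtop]; trivial
  refine Submodule.iSup_induction
    (motive := fun v => F m (As v) = mu m • F m v + L (F (m+1) v)) U hv
    (fun j u hu => ?_) (by simp) (fun x y hx hy => ?_)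
  · show F m (As u) = mu m • F m u + L (F (m+1) u)
    rw [hAs j u hu, map_add, map_smul]
    rcases j with _ | j'
    · rw [hL0 u hu, map_zero, zero_add,
        (hF (m+1)).2 0 (by omega) u hu, map_zero, add_zero]
      by_cases hm : m = 0
      · subst hm; rfl
      · rw [(hF m).2 0 (by omega) u hu]; simp
    · have hLu : L u ∈ U j' := hL j' (Submodule.mem_map_of_mem hu)
      by_cases h1 : j' = m
      · subst h1
        rw [(hF j').1 (L u) hLu, (hF j').2 (j'+1) (by omega) u hu,
          (hF (j'+1)).1 u hu]
        simp
      · rw [(hF m).2 j' h1 (L u) hLu]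
        by_cases h2 : j'+1 = m
        · subst h2
          rw [(hF (j'+1)).1 u hu, (hF (j'+1+1)).2 (j'+1) (by omega) u hu]
          simp
        · rw [(hF m).2 (j'+1) h2 u hu, (hF (m+1)).2 (j'+1) (by omega) u hu]
          simp
  · show F m (As (x+y)) = mu m • F m (x+y) + L (F (m+1) (x+y))
    simp only [map_add, smul_add, hx, hy]
    abel


lemma aux_eig_supp (hUtop : (⨆ i, U i) = ⊤) (hF : IsProjFamily U F)
    (hR : ∀ i, Submodule.map R (U i) ≤ U (i + 1))
    (hA : ∀ i, ∀ u ∈ U i, A u = R u + lam i • u)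
    (hlaminj : ∀ i j : ℕ, i ≠ j → lam i ≠ lam j) :
    ∀ (j : ℕ) (v : V), A v = lam j • v → ∀ m, m < j → F m v = 0 := by
  intro j v hv m
  induction m using Nat.strong_induction_on with
  | _ m ih =>
    intro hmj
    have h1 : F m (A v) = lam j • F m v := by rw [hv, map_smul]
    have cancel : ∀ x : V, lam m • x = lam j • x → x = 0 := by
      intro x hx
      have h2 : (lam j - lam m) • x = 0 := by rw [sub_smul, hx, sub_self]
      rcases smul_eq_zero.mp h2 with h | h
      · exact absurd (sub_eq_zero.mp h) (Ne.symm (hlaminj m j (by omega)))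
      · exact h
    match m, hmj, ih with
    | 0, hmj, ih =>
      rw [aux_F0A U F lam R A hUtop hF hR hA v] at h1
      exact cancel _ h1
    | m'+1, hmj, ih =>
      rw [aux_FA U F lam R A hUtop hF hR hA m' v, ih m' (by omega) (by omega),
        map_zero, add_zero] at h1
      exact cancel _ h1

lemma aux_diag (hUtop : (⨆ i, U i) = ⊤) (hUbot : ∀ i, d < i → U i = ⊥)
    (hF : IsProjFamily U F)
    (hR : ∀ i, Submodule.map R (U i) ≤ U (i + 1))
    (hA : ∀ i, ∀ u ∈ U i, A u = R u + lam i • u)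
    (hlaminj : ∀ i j : ℕ, i ≠ j → lam i ≠ lam j) :
    ∀ v : V, v ∈ ⨆ j : Fin (d+1), Module.End.eigenspace A (lam (j : ℕ)) := by
  have hFmem := aux_F_mem d U F hUtop hF
  have hFsum := aux_F_sum d U F hUtop hUbot hF
  suffices h : ∀ (t n : ℕ) (v : V), d + 1 - n ≤ t → (∀ k, k < n → F k v = 0) →
      v ∈ ⨆ j : Fin (d+1), Module.End.eigenspace A (lam (j : ℕ)) by
    intro v
    exact h (d+1) 0 v (by omega) (fun k hk => absurd hk (Nat.not_lt_zero k))
  intro t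
  induction t with
  | zero =>
    intro n v hn hsupp
    have hv0 : v = 0 := by
      rw [← hFsum v]
      exact Finset.sum_eq_zero fun k hk => hsupp k (by
        have := Finset.mem_range.mp hk; omega)
    rw [hv0]; exact zero_mem _
  | succ t ih =>
    intro n v hn hsupp
    by_cases hnd : d + 1 ≤ n
    · have hv0 : v = 0 := by
        rw [← hFsum v]
        exact Finset.sum_eq_zero fun k hk => hsupp k (by
          have := Finset.mem_range.mp hk; omega)
      rw [hv0]; exact zero_mem _
    · have hnle : n ≤ d := by omega
      set c : ℕ → V := fun k => Nat.rec (F n v) (fun k ck => (lam n - lam (n+k+1))⁻¹ • R ck) k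
        with hcdef
      have hc0 : c 0 = F n v := rfl
      have hcs : ∀ k, c (k+1) = (lam n - lam (n+k+1))⁻¹ • R (c k) := fun k => rfl
      have hcmem : ∀ k, c k ∈ U (n + k) := by
        intro k
        induction k with
        | zero => exact hFmem n v
        | succ k ihk =>
          rw [hcs]
          exact Submodule.smul_mem _ _ (hR (n+k) (Submodule.mem_map_of_mem ihk))
      set w : V := ∑ k ∈ Finset.range (d - n + 1), c k with hw
      have hRckey : ∀ k, (lam (n+(k+1)) - lam n) • c (k+1) = - R (c k) := by
        intro k
        rw [hcs k, smul_smul]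
        have hne : lam n - lam (n+k+1) ≠ 0 :=
          sub_ne_zero.mpr (hlaminj n (n+k+1) (by omega))
        have hcoef : (lam (n+(k+1)) - lam n) * (lam n - lam (n+k+1))⁻¹ = -1 := by
          rw [show n+(k+1) = n+k+1 from rfl]
          field_simp
          ring
        rw [hcoef, neg_one_smul]
      have hAw : A w = lam n • w := by
        have h1 : A w = ∑ k ∈ Finset.range (d-n+1), (R (c k) + lam (n+k) • c k) := by
          rw [hw, map_sum]
          exact Finset.sum_congr rfl fun k _ => hA (n+k) (c k) (hcmem k)
        have h2 : lam n • w = ∑ k ∈ Finset.range (d-n+1), lam n • c k := by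
          rw [hw, Finset.smul_sum]
        rw [h1, h2, ← sub_eq_zero, ← Finset.sum_sub_distrib]
        have h3 : ∀ k, R (c k) + lam (n+k) • c k - lam n • c k
            = R (c k) + (lam (n+k) - lam n) • c k := by
          intro k; rw [sub_smul]; abel
        rw [Finset.sum_congr rfl (fun k _ => h3 k), Finset.sum_add_distrib]
        have h4 : ∑ k ∈ Finset.range (d-n+1), (lam (n+k) - lam n) • c k
            = ∑ k ∈ Finset.range (d-n), -(R (c k)) := by
          rw [Finset.sum_range_succ']
          simp only [Nat.add_zero, sub_self, zero_smul, add_zero]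
          exact Finset.sum_congr rfl fun k _ => hRckey k
        have h5 : ∑ k ∈ Finset.range (d-n+1), R (c k)
            = ∑ k ∈ Finset.range (d-n), R (c k) := by
          rw [Finset.sum_range_succ]
          have : R (c (d-n)) = 0 := by
            have hmem : R (c (d-n)) ∈ U (n + (d-n) + 1) :=
              hR (n+(d-n)) (Submodule.mem_map_of_mem (hcmem (d-n)))
            rw [hUbot (n+(d-n)+1) (by omega)] at hmem
            simpa using hmem
          rw [this, add_zero]
        rw [h4, h5, ← Finset.sum_add_distrib]
        simp
      have hFw_lt : ∀ m, m < n → F m w = 0 := by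
        intro m hm
        rw [hw, map_sum]
        exact Finset.sum_eq_zero fun k _ => (hF m).2 (n+k) (by omega) (c k) (hcmem k)
      have hFwn : F n w = F n v := by
        rw [hw, map_sum,
          Finset.sum_eq_single_of_mem 0 (Finset.mem_range.mpr (by omega))
            (fun b _ hb => (hF n).2 (n+b) (by omega) (c b) (hcmem b))]
        exact (hF n).1 (c 0) (hcmem 0)
      have hwmem : w ∈ ⨆ j : Fin (d+1), Module.End.eigenspace A (lam (j : ℕ)) := by
        refine Submodule.mem_iSup_of_mem (⟨n, by omega⟩ : Fin (d+1)) ?_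
        exact Module.End.mem_eigenspace_iff.mpr hAw
      have hvw : v - w ∈ ⨆ j : Fin (d+1), Module.End.eigenspace A (lam (j : ℕ)) := by
        refine ih (n+1) (v - w) (by omega) ?_
        intro k hk
        rw [map_sub]
        rcases Nat.lt_or_ge k n with h | h
        · rw [hsupp k h, hFw_lt k h, sub_self]
        · have hkn : k = n := by omega
          subst hkn
          rw [hFwn, sub_self]
      have : v = w + (v - w) := by abel
      rw [this]
      exact add_mem hwmem hvw

end Aux

/-- Lemma 11.3: with `r` the minimal index with `E_r W ≠ 0`, for every
`v ∈ E_r W` the vector `u = F_r v` satisfies `L u = 0`. -/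
theorem statement11 {K : Type*} [Field K] [IsAlgClosed K] [CharZero K]
    (q : K) (hq : q ≠ 0) (hq1 : ∀ n : ℕ, 0 < n → q ^ n ≠ 1)
    {V : Type*} [AddCommGroup V] [Module K V] [FiniteDimensional K V]
    (d : ℕ) (U : ℕ → Submodule K V) (R L A As : Module.End K V)
    (hsetup : TDSetup q d U R L A As)
    (hserre : QSerre q A As)
    (E F : ℕ → Module.End K V)
    (hE : IsProjFamily (fun i => Module.End.eigenspace A (q ^ (2 * (i : ℤ) - d))) E)
    (hF : IsProjFamily U F)
    (W : Submodule K V) (hW0 : W ≠ ⊥)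
    (hWA : Submodule.map A W ≤ W) (hWAs : Submodule.map As W ≤ W)
    (hWirr : ∀ W' : Submodule K V, W' ≤ W → Submodule.map A W' ≤ W' →
      Submodule.map As W' ≤ W' → W' = ⊥ ∨ W' = W)
    (r : ℕ) (hr : Submodule.map (E r) W ≠ ⊥)
    (hrmin : ∀ i, i < r → Submodule.map (E i) W = ⊥) :
    ∀ v ∈ Submodule.map (E r) W, L (F r v) = 0 := by
  obtain ⟨⟨hUne, hUbot, hUtop, hUdisj⟩, hR, hL, hL0, hA, hAs⟩ := hsetup
  have hF' : IsProjFamily U F := hF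
  have hE' : IsProjFamily (fun i => Module.End.eigenspace A (q ^ (2 * (i : ℤ) - (d:ℤ)))) E := hE
  have hlaminj := aux_lam_inj q hq hq1 d
  have hFmem := aux_F_mem d U F hUtop hF'
  have hFAs := aux_FAs U F (fun i => q ^ ((d:ℤ) - 2 * (i:ℤ))) L As hUtop hF' hL hL0 hAs
  have hsupp : ∀ (j : ℕ) (v : V), A v = q ^ (2 * (j:ℤ) - (d:ℤ)) • v → ∀ m, m < j → F m v = 0 :=
    aux_eig_supp U F (fun i => q ^ (2 * (i:ℤ) - (d:ℤ))) R A hUtop hF' hR hA hlaminj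
  have hdiag : ∀ v : V, v ∈ ⨆ j : Fin (d+1),
      Module.End.eigenspace A (q ^ (2 * ((j:ℕ):ℤ) - (d:ℤ))) :=
    aux_diag d U F (fun i => q ^ (2 * (i:ℤ) - (d:ℤ))) R A hUtop hUbot hF' hR hA hlaminj
  have hErVsp : ∀ (s : ℕ) (v : V), A (E s v) = q ^ (2 * (s:ℤ) - (d:ℤ)) • E s v := by
    intro s v
    refine Submodule.iSup_induction
      (motive := fun v => A (E s v) = q ^ (2 * (s:ℤ) - (d:ℤ)) • E s v) _ (hdiag v)
      (fun j u hu => ?_) (by simp) (fun x y hx hy => ?_)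
    · show A (E s u) = q ^ (2 * (s:ℤ) - (d:ℤ)) • E s u
      by_cases hj : (j : ℕ) = s
      · rw [← hj, (hE' (j:ℕ)).1 u hu]
        exact Module.End.mem_eigenspace_iff.mp hu
      · rw [(hE' s).2 (j:ℕ) hj u hu]; simp
    · show A (E s (x+y)) = q ^ (2 * (s:ℤ) - (d:ℤ)) • E s (x+y)
      simp only [map_add, smul_add, hx, hy]
  have hEsum : ∀ v : V, ∑ j ∈ Finset.range (d+1), E j v = v := by
    intro v
    refine Submodule.iSup_induction
      (motive := fun v => ∑ j ∈ Finset.range (d+1), E j v = v) _ (hdiag v)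
      (fun j u hu => ?_) (by simp) (fun x y hx hy => ?_)
    · show ∑ j' ∈ Finset.range (d+1), E j' u = u
      rw [Finset.sum_eq_single_of_mem (j:ℕ) (Finset.mem_range.mpr j.isLt)
        (fun b _ hb => (hE' b).2 (j:ℕ) (Ne.symm hb) u hu)]
      exact (hE' (j:ℕ)).1 u hu
    · show ∑ j' ∈ Finset.range (d+1), E j' (x+y) = x+y
      simp only [map_add, Finset.sum_add_distrib, hx, hy]
  have hEjW0 : ∀ j, j < r → ∀ w ∈ W, E j w = 0 := by
    intro j hj w hw
    have h1 : E j w ∈ Submodule.map (E j) W := Submodule.mem_map_of_mem hw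
    rw [hrmin j hj] at h1
    simpa using h1
  have hrd : r ≤ d := by
    by_contra hrd
    apply hr
    rw [Submodule.eq_bot_iff]
    rintro x ⟨w, hw, rfl⟩
    have h1 : E r w = E r (∑ j ∈ Finset.range (d+1), E j w) := by rw [hEsum w]
    rw [map_sum] at h1
    rw [h1]
    refine Finset.sum_eq_zero fun j hj => ?_
    have hjr : j ≠ r := by have := Finset.mem_range.mp hj; omega
    exact (hE' r).2 j hjr (E j w) (Module.End.mem_eigenspace_iff.mpr (hErVsp j w))
  have hWsupp : ∀ w ∈ W, ∀ m, m < r → F m w = 0 := by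
    intro w hw m hm
    have h1 : F m w = ∑ j ∈ Finset.range (d+1), F m (E j w) := by
      conv_lhs => rw [← hEsum w]
      rw [map_sum]
    rw [h1]
    refine Finset.sum_eq_zero fun j hj => ?_
    rcases Nat.lt_or_ge j r with hjr | hjr
    · rw [hEjW0 j hjr w hw, map_zero]
    · exact hsupp j (E j w) (hErVsp j w) m (by omega)
  rintro v ⟨w, hw, rfl⟩
  rcases Nat.eq_zero_or_pos r with hr0 | hrpos
  · subst hr0
    exact hL0 _ (hFmem 0 (E 0 w))
  · obtain ⟨s, rfl⟩ : ∃ s, r = s + 1 := ⟨r - 1, by omega⟩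
    have hAsw : As w ∈ W := hWAs (Submodule.mem_map_of_mem hw)
    have h0 : F s (As w) = 0 := hWsupp (As w) hAsw s (by omega)
    have h1 : F s (As w) = ∑ j ∈ Finset.range (d+1), F s (As (E j w)) := by
      conv_lhs => rw [← hEsum w]
      rw [map_sum, map_sum]
    have h2 : ∀ j ∈ Finset.range (d+1), j ≠ s+1 → F s (As (E j w)) = 0 := by
      intro j hj hjne
      rcases Nat.lt_or_ge j (s+1) with hlt | hge
      · rw [hEjW0 j hlt w hw]; simp
      · have hjgt : s + 1 < j := by omega
        rw [hFAs s (E j w), hsupp j (E j w) (hErVsp j w) s (by omega),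
          hsupp j (E j w) (hErVsp j w) (s+1) (by omega), map_zero, smul_zero, zero_add]
    have h3 : F s (As (E (s+1) w)) = 0 := by
      have hsum := Finset.sum_eq_single_of_mem (f := fun j => F s (As (E j w))) (s+1)
        (Finset.mem_range.mpr (by omega)) h2
      rw [← hsum, ← h1]
      exact h0
    rw [hFAs s (E (s+1) w), hsupp (s+1) (E (s+1) w) (hErVsp (s+1) w) s (by omega),
      smul_zero, zero_add] at h3
    exact h3
end
end

section
/- In the Setup, let K : V → V denote the linear map acting on U_i as multiplication by q^{2i−d} for 0 ≤ i ≤ d (so A = R + K and A* = L + K⁻¹). Assume additionally: A and A* satisfy the cubic q-Serre relations; dim U_0 = 1; and the only subspaces of V invariant under each of R, L and K are 0 and V. Let W be a nonzero subspace of V with AW ⊆ W and A*W ⊆ W, such that the only subspaces W' ⊆ W with AW' ⊆ W' and A*W' ⊆ W' are 0 and W. Then V_0 ⊆ W, where V_0 is the eigenspace of A for the eigenvalue q^{−d}. -/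
noncomputable section

open Polynomial in
private theorem aux_ext0 {K V : Type*} [Field K] [AddCommGroup V] [Module K V]
    (U : ℕ → Submodule K V) (hUtop : (⨆ i, U i) = ⊤)
    (f : Module.End K V) (h : ∀ i, ∀ u ∈ U i, f u = 0) : f = 0 := by
  ext x
  have hx : x ∈ ⨆ i, U i := by rw [hUtop]; trivial
  simp only [LinearMap.zero_apply]
  refine Submodule.iSup_induction (motive := fun v => f v = 0) U hx h (map_zero f) ?_
  intro a b ha hb
  rw [map_add, ha, hb, add_zero]

/-- Proposition 11.6: assume moreover that `A, A*` satisfy the cubic `q`-Serre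
relations, `dim U₀ = 1`, and the only subspaces of `V` invariant under each of `R, L, K` are `0`
and `V`. If `W` is a nonzero `A, A*`-invariant irreducible subspace of `V`, then `W` contains the
eigenspace `V₀` of `A` for the eigenvalue `q^{−d}`. -/
theorem statement13 {K : Type*} [Field K] [IsAlgClosed K] [CharZero K]
    (q : K) (hq : q ≠ 0) (hq1 : ∀ n : ℕ, 0 < n → q ^ n ≠ 1)
    {V : Type*} [AddCommGroup V] [Module K V] [FiniteDimensional K V]
    (d : ℕ) (U : ℕ → Submodule K V) (R L A As : Module.End K V)
    (hsetup : TDSetup q d U R L A As)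
    (Kop : Module.End K V)
    (hK : ∀ i, ∀ u ∈ U i, Kop u = q ^ (2 * (i : ℤ) - d) • u)
    (hserre : QSerre q A As)
    (hU0 : Module.finrank K (U 0) = 1)
    (hBirr : ∀ W' : Submodule K V, Submodule.map R W' ≤ W' → Submodule.map L W' ≤ W' →
      Submodule.map Kop W' ≤ W' → W' = ⊥ ∨ W' = ⊤)
    (W : Submodule K V) (hW0 : W ≠ ⊥)
    (hWA : Submodule.map A W ≤ W) (hWAs : Submodule.map As W ≤ W)
    (hWirr : ∀ W' : Submodule K V, W' ≤ W → Submodule.map A W' ≤ W' →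
      Submodule.map As W' ≤ W' → W' = ⊥ ∨ W' = W) :
    Module.End.eigenspace A (q ^ (-(d : ℤ))) ≤ W := by
  classical
  obtain ⟨⟨hUne, hUbot, hUtop, hUdisj⟩, hR, hL, hL0, hA, hAs⟩ := hsetup
  set θ : ℕ → K := fun i => q ^ (2 * (i : ℤ) - (d : ℤ)) with hθdef
  -- basic facts about θ
  have hθ0 : ∀ i : ℕ, θ i ≠ 0 := fun i => zpow_ne_zero _ hq
  have hθs : ∀ i : ℕ, θ (i + 1) = q ^ (2 : ℤ) * θ i := by
    intro i
    simp only [hθdef]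
    rw [← zpow_add₀ hq]
    congr 1
    push_cast
    ring
  have hθne : ∀ i j : ℕ, i < j → θ i ≠ θ j := by
    intro i j hij heq
    obtain ⟨n, rfl⟩ : ∃ n, j = i + (n + 1) := ⟨j - i - 1, by omega⟩
    have e : (2 * ((i + (n + 1) : ℕ) : ℤ) - (d : ℤ))
        = (2 * (i : ℤ) - (d : ℤ)) + ((2 * (n + 1) : ℕ) : ℤ) := by push_cast; ring
    simp only [hθdef] at heq
    rw [e, zpow_add₀ hq, zpow_natCast] at heq
    have h1 : q ^ (2 * (i : ℤ) - (d : ℤ)) * 1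
        = q ^ (2 * (i : ℤ) - (d : ℤ)) * q ^ (2 * (n + 1)) := by rw [mul_one]; exact heq
    have h2 := mul_left_cancel₀ (zpow_ne_zero _ hq) h1
    exact hq1 (2 * (n + 1)) (by omega) h2.symm
  -- restated setup facts
  have hK' : ∀ i, ∀ u ∈ U i, Kop u = θ i • u := by
    intro i u hu; simp only [hθdef]; exact hK i u hu
  have hA' : ∀ i, ∀ u ∈ U i, A u = R u + θ i • u := by
    intro i u hu; simp only [hθdef]; exact hA i u hu
  have hRmem : ∀ i, ∀ u ∈ U i, R u ∈ U (i + 1) := fun i u hu => hR i ⟨u, hu, rfl⟩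
  have hLmem : ∀ i, ∀ u ∈ U (i + 1), L u ∈ U i := fun i u hu => hL i ⟨u, hu, rfl⟩
  have hext : ∀ f g : Module.End K V, (∀ i, ∀ u ∈ U i, f u = g u) → f = g := by
    intro f g h
    have := aux_ext0 U hUtop (f - g) (by
      intro i u hu
      simp only [LinearMap.sub_apply]
      rw [h i u hu, sub_self])
    exact sub_eq_zero.mp this
  -- A = R + Kop
  have hARK : A = R + Kop := by
    refine hext _ _ ?_
    intro i u hu
    rw [hA' i u hu, LinearMap.add_apply, hK' i u hu]
  -- N := As - L acts as the inverse of Kop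
  set N : Module.End K V := As - L with hNdef
  have hNapp : ∀ i, ∀ u ∈ U i, N u = q ^ ((d : ℤ) - 2 * (i : ℤ)) • u := by
    intro i u hu
    rw [hNdef, LinearMap.sub_apply, hAs i u hu, add_sub_cancel_left]
  have hNK : N * Kop = 1 := by
    refine hext _ _ ?_
    intro i u hu
    rw [Module.End.mul_apply, hK' i u hu, map_smul,
      hNapp i u hu, Module.End.one_apply, smul_smul]
    simp only [hθdef]
    rw [← zpow_add₀ hq]
    norm_num
  -- commutation relations
  have hKR : Kop * R = (q ^ (2 : ℤ)) • (R * Kop) := by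
    refine hext _ _ ?_
    intro i u hu
    rw [Module.End.mul_apply, hK' (i + 1) (R u) (hRmem i u hu), LinearMap.smul_apply,
      Module.End.mul_apply, hK' i u hu, map_smul, hθs i, smul_smul]
  have hLK : L * Kop = (q ^ (2 : ℤ)) • (Kop * L) := by
    refine hext _ _ ?_
    intro i u hu
    rw [Module.End.mul_apply, hK' i u hu, map_smul, LinearMap.smul_apply, Module.End.mul_apply]
    cases i with
    | zero => rw [hL0 u hu]; simp
    | succ j =>
        rw [hK' j (L u) (hLmem j u hu), hθs j, smul_smul]
  have hKnR : ∀ n : ℕ, Kop ^ n * R = ((q ^ (2 : ℤ)) ^ n) • (R * Kop ^ n) := by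
    intro n
    induction n with
    | zero => simp
    | succ n ih =>
        calc Kop ^ (n + 1) * R = Kop * (Kop ^ n * R) := by rw [pow_succ', mul_assoc]
          _ = Kop * (((q ^ (2:ℤ)) ^ n) • (R * Kop ^ n)) := by rw [ih]
          _ = ((q ^ (2:ℤ)) ^ n) • (Kop * (R * Kop ^ n)) := mul_smul_comm _ _ _
          _ = ((q ^ (2:ℤ)) ^ n) • ((Kop * R) * Kop ^ n) := by rw [mul_assoc]
          _ = ((q ^ (2:ℤ)) ^ n) • (((q ^ (2:ℤ)) • (R * Kop)) * Kop ^ n) := by rw [hKR]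
          _ = ((q ^ (2:ℤ)) ^ n) • ((q ^ (2:ℤ)) • ((R * Kop) * Kop ^ n)) := by
              rw [smul_mul_assoc]
          _ = ((q ^ (2:ℤ)) ^ (n + 1)) • (R * (Kop * Kop ^ n)) := by
              rw [smul_smul, mul_assoc, ← pow_succ]
          _ = ((q ^ (2:ℤ)) ^ (n + 1)) • (R * Kop ^ (n + 1)) := by rw [← pow_succ']
  have hLKn : ∀ n : ℕ, L * Kop ^ n = ((q ^ (2 : ℤ)) ^ n) • (Kop ^ n * L) := by
    intro n
    induction n with
    | zero => simp
    | succ n ih =>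
        calc L * Kop ^ (n + 1) = (L * Kop ^ n) * Kop := by rw [pow_succ, mul_assoc]
          _ = (((q ^ (2:ℤ)) ^ n) • (Kop ^ n * L)) * Kop := by rw [ih]
          _ = ((q ^ (2:ℤ)) ^ n) • ((Kop ^ n * L) * Kop) := smul_mul_assoc _ _ _
          _ = ((q ^ (2:ℤ)) ^ n) • (Kop ^ n * (L * Kop)) := by rw [mul_assoc]
          _ = ((q ^ (2:ℤ)) ^ n) • (Kop ^ n * ((q ^ (2:ℤ)) • (Kop * L))) := by rw [hLK]
          _ = ((q ^ (2:ℤ)) ^ n) • ((q ^ (2:ℤ)) • (Kop ^ n * (Kop * L))) := by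
              rw [mul_smul_comm]
          _ = ((q ^ (2:ℤ)) ^ (n + 1)) • ((Kop ^ n * Kop) * L) := by
              rw [smul_smul, ← pow_succ, mul_assoc]
          _ = ((q ^ (2:ℤ)) ^ (n + 1)) • (Kop ^ (n + 1) * L) := by rw [← pow_succ]
  -- the homogeneous closure Z of W
  set Z : Submodule K V := ⨆ n : ℕ, Submodule.map (Kop ^ n) W with hZdef
  have hmemZ : ∀ (n : ℕ) (w : V), w ∈ W → (Kop ^ n) w ∈ Z :=
    fun n w hw => Submodule.mem_iSup_of_mem n ⟨w, hw, rfl⟩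
  have hWZ : W ≤ Z := by
    intro w hw
    have := hmemZ 0 w hw
    rwa [pow_zero, Module.End.one_apply] at this
  have hZpoly : ∀ p : Polynomial K, ∀ w ∈ W, (Polynomial.aeval Kop p) w ∈ Z := by
    intro p
    induction p using Polynomial.induction_on' with
    | add p r hp hr =>
        intro w hw
        rw [map_add, LinearMap.add_apply]
        exact Z.add_mem (hp w hw) (hr w hw)
    | monomial n a =>
        intro w hw
        rw [Polynomial.aeval_monomial, Module.End.mul_apply, Module.algebraMap_end_apply]
        exact Z.smul_mem a (hmemZ n w hw)
  have hZK : Submodule.map Kop Z ≤ Z := by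
    rw [hZdef, Submodule.map_iSup]
    refine iSup_le fun n => ?_
    have e : Submodule.map Kop (Submodule.map (Kop ^ n) W) = Submodule.map (Kop ^ (n + 1)) W := by
      rw [← Submodule.map_comp, ← Module.End.mul_eq_comp, ← pow_succ']
    rw [e]
    exact le_iSup (fun n => Submodule.map (Kop ^ n) W) (n + 1)
  -- N is a polynomial in Kop
  set P : Polynomial K := ∏ i ∈ Finset.range (d + 1), (Polynomial.X - Polynomial.C (θ i))
    with hPdef
  have hPK : Polynomial.aeval Kop P = 0 := by
    refine aux_ext0 U hUtop _ ?_
    intro i u hu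
    by_cases hid : i ≤ d
    · rcases eq_or_ne u 0 with rfl | hu0
      · rw [map_zero]
      · have hev : Module.End.HasEigenvector Kop (θ i) u :=
          ⟨Module.End.mem_eigenspace_iff.mpr (hK' i u hu), hu0⟩
        rw [Module.End.aeval_apply_of_hasEigenvector hev]
        have : P.eval (θ i) = 0 := by
          rw [hPdef, Polynomial.eval_prod]
          refine Finset.prod_eq_zero (i := i) (Finset.mem_range.mpr (by omega)) ?_
          simp
        rw [this, zero_smul]
    · have : U i = ⊥ := hUbot i (by omega)
      rw [this, Submodule.mem_bot] at hu
      rw [hu, map_zero]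
  set a : K := P.coeff 0 with hadef
  have ha : a ≠ 0 := by
    rw [hadef, Polynomial.coeff_zero_eq_eval_zero, hPdef, Polynomial.eval_prod]
    rw [Finset.prod_ne_zero_iff]
    intro i _
    simp only [Polynomial.eval_sub, Polynomial.eval_X, Polynomial.eval_C, zero_sub]
    exact neg_ne_zero.mpr (hθ0 i)
  have hKg : Kop * Polynomial.aeval Kop P.divX = (-a) • 1 := by
    have h1 : Polynomial.aeval Kop (Polynomial.X * P.divX + Polynomial.C a) = 0 := by
      rw [Polynomial.X_mul_divX_add]; exact hPK
    rw [map_add, map_mul, Polynomial.aeval_X, Polynomial.aeval_C,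
      Algebra.algebraMap_eq_smul_one] at h1
    rw [eq_neg_of_add_eq_zero_left h1, neg_smul]
  have hNg : N = (-a⁻¹) • Polynomial.aeval Kop P.divX := by
    calc N = N * 1 := (mul_one N).symm
      _ = N * ((-a⁻¹) • (Kop * Polynomial.aeval Kop P.divX)) := by
          rw [hKg, smul_smul, neg_mul_neg, inv_mul_cancel₀ ha, one_smul]
      _ = (-a⁻¹) • ((N * Kop) * Polynomial.aeval Kop P.divX) := by
          rw [mul_smul_comm, mul_assoc]
      _ = (-a⁻¹) • Polynomial.aeval Kop P.divX := by rw [hNK, one_mul]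
  have hNZ : ∀ (n : ℕ) (w : V), w ∈ W → (Kop ^ n) (N w) ∈ Z := by
    intro n w hw
    rw [hNg, LinearMap.smul_apply, map_smul]
    refine Z.smul_mem _ ?_
    have e : (Kop ^ n) (Polynomial.aeval Kop P.divX w)
        = Polynomial.aeval Kop (Polynomial.X ^ n * P.divX) w := by
      rw [map_mul, map_pow, Polynomial.aeval_X, Module.End.mul_apply]
    rw [e]
    exact hZpoly _ w hw
  -- Z is R, L, Kop invariant, hence Z = ⊤
  have hq2n : ∀ n : ℕ, ((q ^ (2 : ℤ)) ^ n) ≠ 0 := fun n => pow_ne_zero _ (zpow_ne_zero _ hq)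
  have hZR : Submodule.map R Z ≤ Z := by
    rw [hZdef, Submodule.map_iSup]
    refine iSup_le fun n => ?_
    rw [Submodule.map_le_iff_le_comap]
    rintro x ⟨w, hw, rfl⟩
    show R ((Kop ^ n) w) ∈ Z
    have h1 : (Kop ^ n) (R w) = ((q ^ (2 : ℤ)) ^ n) • R ((Kop ^ n) w) := by
      have h0 := congrArg (fun f : Module.End K V => f w) (hKnR n)
      simpa only [Module.End.mul_apply, LinearMap.smul_apply] using h0
    have h2 : R ((Kop ^ n) w) = ((q ^ (2 : ℤ)) ^ n)⁻¹ • (Kop ^ n) (R w) := by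
      rw [h1, smul_smul, inv_mul_cancel₀ (hq2n n), one_smul]
    rw [h2]
    refine Z.smul_mem _ ?_
    have hRw : R w = A w - Kop w := by rw [hARK]; simp
    rw [hRw, map_sub]
    refine Z.sub_mem (hmemZ n _ (hWA ⟨w, hw, rfl⟩)) ?_
    have e : (Kop ^ n) (Kop w) = (Kop ^ (n + 1)) w := by
      rw [pow_succ, Module.End.mul_apply]
    rw [e]
    exact hmemZ (n + 1) w hw
  have hZL : Submodule.map L Z ≤ Z := by
    rw [hZdef, Submodule.map_iSup]
    refine iSup_le fun n => ?_
    rw [Submodule.map_le_iff_le_comap]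
    rintro x ⟨w, hw, rfl⟩
    show L ((Kop ^ n) w) ∈ Z
    have h1 : L ((Kop ^ n) w) = ((q ^ (2 : ℤ)) ^ n) • (Kop ^ n) (L w) := by
      have h0 := congrArg (fun f : Module.End K V => f w) (hLKn n)
      simpa only [Module.End.mul_apply, LinearMap.smul_apply] using h0
    rw [h1]
    refine Z.smul_mem _ ?_
    have hLw : L w = As w - N w := by rw [hNdef]; simp
    rw [hLw, map_sub]
    exact Z.sub_mem (hmemZ n _ (hWAs ⟨w, hw, rfl⟩)) (hNZ n w hw)
  have hZbot : Z ≠ ⊥ := by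
    intro h
    exact hW0 (le_bot_iff.mp (h ▸ hWZ))
  have hZtop : Z = ⊤ := (hBirr Z hZR hZL hZK).resolve_left hZbot
  -- the flag G
  set G : ℕ → Submodule K V := fun m => ⨆ j : ℕ, U (j + m) with hGdef
  have hG0 : G 0 = ⊤ := by
    rw [hGdef]
    simpa using hUtop
  have hGd1 : G (d + 1) = ⊥ := by
    rw [hGdef]
    exact iSup_eq_bot.mpr fun j => hUbot _ (by omega)
  have hUG : ∀ j m : ℕ, U (j + m) ≤ G m := fun j m => le_iSup (fun j => U (j + m)) j
  have hGK : ∀ x ∈ G 1, Kop x ∈ G 1 := by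
    intro x hx
    refine Submodule.iSup_induction (motive := fun v => Kop v ∈ G 1) (fun j => U (j + 1)) hx ?_ ?_ ?_
    · intro j u hu
      rw [hK' (j + 1) u hu]
      exact hUG j 1 (Submodule.smul_mem _ _ hu)
    · show Kop (0 : V) ∈ G 1
      rw [map_zero]; exact (G 1).zero_mem
    · intro x y hx hy
      show Kop (x + y) ∈ G 1
      rw [map_add]; exact (G 1).add_mem hx hy
  have hflag : ∀ m : ℕ, ∀ x ∈ G m, A x - θ m • x ∈ G (m + 1) := by
    intro m x hx
    refine Submodule.iSup_induction (motive := fun v => A v - θ m • v ∈ G (m + 1))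
      (fun j => U (j + m)) hx ?_ ?_ ?_
    · intro j u hu
      show A u - θ m • u ∈ G (m + 1)
      have e : A u - θ m • u = R u + (θ (j + m) - θ m) • u := by
        rw [hA' (j + m) u hu, sub_smul]
        abel
      rw [e]
      refine (G (m + 1)).add_mem (hUG j (m + 1) (hRmem (j + m) u hu)) ?_
      cases j with
      | zero =>
          simp only [Nat.zero_add, sub_self, zero_smul]
          exact (G (m + 1)).zero_mem
      | succ j' =>
          have hu' : u ∈ U (j' + (m + 1)) := by
            have e2 : j' + (m + 1) = j' + 1 + m := by omega
            rw [e2]; exact hu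
          exact hUG j' (m + 1) (Submodule.smul_mem _ _ hu')
    · show A (0 : V) - θ m • (0 : V) ∈ G (m + 1)
      simp only [map_zero, smul_zero, sub_zero]
      exact (G (m + 1)).zero_mem
    · intro x y hx hy
      show A (x + y) - θ m • (x + y) ∈ G (m + 1)
      have e : A (x + y) - θ m • (x + y) = (A x - θ m • x) + (A y - θ m • y) := by
        rw [map_add, smul_add]; abel
      rw [e]
      exact (G (m + 1)).add_mem hx hy
  -- vanishing of q^{-d}-eigenvectors in G m for m ≥ 1
  have hVG : ∀ k m : ℕ, m + k = d + 1 → 1 ≤ m → ∀ v : V, A v = θ 0 • v → v ∈ G m → v = 0 := by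
    intro k
    induction k with
    | zero =>
        intro m hm _ v _ hv
        have : m = d + 1 := by omega
        subst this
        rw [hGd1, Submodule.mem_bot] at hv
        exact hv
    | succ k ih =>
        intro m hm hm1 v hveig hvG
        have h1 : A v - θ m • v ∈ G (m + 1) := hflag m v hvG
        rw [hveig, ← sub_smul] at h1
        have heig2 : A ((θ 0 - θ m) • v) = θ 0 • ((θ 0 - θ m) • v) := by
          rw [map_smul, hveig, smul_comm]
        have h2 : (θ 0 - θ m) • v = 0 := ih (m + 1) (by omega) (by omega) _ heig2 h1
        have hne : θ 0 - θ m ≠ 0 := sub_ne_zero.mpr (hθne 0 m (by omega))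
        exact (smul_eq_zero.mp h2).resolve_left hne
  have heigz : ∀ v : V, A v = θ 0 • v → v ∈ G 1 → v = 0 :=
    fun v hv hvG => hVG d 1 (by omega) le_rfl v hv hvG
  -- products of (A - θ i) kill flags
  have hprod : ∀ k m : ℕ, m + k = d + 1 →
      Submodule.map (((List.range k).map
        (fun i => A - θ (d - i) • (1 : Module.End K V))).prod) (G m) ≤ ⊥ := by
    intro k
    induction k with
    | zero =>
        intro m hm
        have hm' : m = d + 1 := by omega
        subst hm'
        rw [hGd1]
        simp
    | succ k ih =>
        intro m hm
        rw [List.range_succ, List.map_append, List.prod_append, List.map_singleton,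
          List.prod_singleton]
        have hdk : d - k = m := by omega
        rw [hdk, Module.End.mul_eq_comp, Submodule.map_comp]
        refine le_trans (Submodule.map_mono ?_) (ih (m + 1) (by omega))
        rw [Submodule.map_le_iff_le_comap]
        intro x hx
        have h := hflag m x hx
        simpa only [Submodule.mem_comap, LinearMap.sub_apply, LinearMap.smul_apply, Module.End.one_apply] using h
  have hfull : (((List.range (d + 1)).map
      (fun i => A - θ (d - i) • (1 : Module.End K V))).prod) = 0 := by
    have h := hprod (d + 1) 0 (by omega)
    rw [hG0, Submodule.map_top, le_bot_iff, LinearMap.range_eq_bot] at h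
    exact h
  -- aeval of nice products
  have haeprod : ∀ (k : ℕ) (f : ℕ → K),
      Polynomial.aeval A (∏ i ∈ Finset.range k, (Polynomial.X - Polynomial.C (f i)))
        = ((List.range k).map (fun i => A - f i • (1 : Module.End K V))).prod := by
    intro k f
    induction k with
    | zero => simp
    | succ k ih =>
        rw [Finset.prod_range_succ, List.range_succ, List.map_append, List.prod_append,
          List.map_singleton, List.prod_singleton, map_mul, ih, map_sub, Polynomial.aeval_X,
          Polynomial.aeval_C, Algebra.algebraMap_eq_smul_one]
  -- W is invariant under polynomials in A
  have hAnW : ∀ (n : ℕ) (w : V), w ∈ W → (A ^ n) w ∈ W := by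
    intro n
    induction n with
    | zero => intro w hw; rwa [pow_zero, Module.End.one_apply]
    | succ n ih =>
        intro w hw
        rw [pow_succ, Module.End.mul_apply]
        exact ih _ (hWA ⟨w, hw, rfl⟩)
  have hWaeval : ∀ p : Polynomial K, ∀ w ∈ W, (Polynomial.aeval A p) w ∈ W := by
    intro p
    induction p using Polynomial.induction_on' with
    | add p r hp hr =>
        intro w hw
        rw [map_add, LinearMap.add_apply]
        exact W.add_mem (hp w hw) (hr w hw)
    | monomial n b =>
        intro w hw
        rw [Polynomial.aeval_monomial, Module.End.mul_apply, Module.algebraMap_end_apply]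
        exact W.smul_mem b (hAnW n w hw)
  -- an element of W outside G 1
  have hWG1 : ¬ W ≤ G 1 := by
    intro hWG
    have hZG : Z ≤ G 1 := by
      rw [hZdef]
      refine iSup_le fun n => ?_
      induction n with
      | zero =>
          intro x hx
          obtain ⟨w, hw, rfl⟩ := hx
          rw [pow_zero, Module.End.one_apply]
          exact hWG hw
      | succ n ih =>
          intro x hx
          obtain ⟨w, hw, rfl⟩ := hx
          have e : (Kop ^ (n + 1)) w = Kop ((Kop ^ n) w) := by
            rw [pow_succ', Module.End.mul_apply]
          rw [e]
          exact hGK _ (ih ⟨w, hw, rfl⟩)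
    rw [hZtop] at hZG
    have hU0le : U 0 ≤ ⨆ j, ⨆ _ : j ≠ 0, U j := by
      refine le_trans le_top (le_trans hZG ?_)
      refine iSup_le fun j => ?_
      exact le_iSup_of_le (j + 1) (le_iSup_of_le (by omega) le_rfl)
    exact hUne 0 (Nat.zero_le d) ((hUdisj 0).eq_bot_of_le hU0le)
  obtain ⟨w, hwW, hwG1⟩ := SetLike.not_le_iff_exists.mp hWG1
  -- construct w0 ∈ W, eigenvector for θ 0, with w - w0 ∈ G 1
  set Prest : Polynomial K := ∏ i ∈ Finset.range d, (Polynomial.X - Polynomial.C (θ (d - i)))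
    with hPrestdef
  set c : K := ∏ i ∈ Finset.range d, (θ 0 - θ (d - i)) with hcdef
  have hc : c ≠ 0 := by
    rw [hcdef, Finset.prod_ne_zero_iff]
    intro i hi
    rw [Finset.mem_range] at hi
    exact sub_ne_zero.mpr (hθne 0 (d - i) (by omega))
  set w0' : V := (Polynomial.aeval A Prest) w with hw0'def
  have hw0'W : w0' ∈ W := hWaeval Prest w hwW
  have hkey : (A - θ 0 • (1 : Module.End K V)) * (Polynomial.aeval A Prest) = 0 := by
    have e1 : (Polynomial.X - Polynomial.C (θ 0)) * Prest
        = ∏ i ∈ Finset.range (d + 1), (Polynomial.X - Polynomial.C (θ (d - i))) := by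
      rw [Finset.prod_range_succ, Nat.sub_self, mul_comm, hPrestdef]
    calc (A - θ 0 • (1 : Module.End K V)) * (Polynomial.aeval A Prest)
        = Polynomial.aeval A ((Polynomial.X - Polynomial.C (θ 0)) * Prest) := by
          rw [map_mul, map_sub, Polynomial.aeval_X, Polynomial.aeval_C,
            Algebra.algebraMap_eq_smul_one]
      _ = 0 := by rw [e1, haeprod (d + 1) (fun i => θ (d - i)), hfull]
  have hw0'eig : A w0' = θ 0 • w0' := by
    have h := congrArg (fun f : Module.End K V => f w) hkey
    simp only [Module.End.mul_apply, LinearMap.sub_apply, LinearMap.smul_apply,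
      Module.End.one_apply, LinearMap.zero_apply] at h
    rw [← hw0'def] at h
    exact sub_eq_zero.mp h
  have hreval : Prest.eval (θ 0) = c := by
    rw [hPrestdef, Polynomial.eval_prod, hcdef]
    refine Finset.prod_congr rfl fun i _ => by simp
  have hdvd : (Polynomial.X - Polynomial.C (θ 0)) ∣ (Polynomial.C c - Prest) := by
    rw [Polynomial.dvd_iff_isRoot]
    simp [Polynomial.IsRoot, hreval]
  obtain ⟨h2, hh2⟩ := hdvd
  have hcw : c • w - w0' ∈ G 1 := by
    have e : Polynomial.aeval A (Polynomial.C c - Prest)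
        = (A - θ 0 • (1 : Module.End K V)) * Polynomial.aeval A h2 := by
      rw [hh2, map_mul, map_sub, Polynomial.aeval_X, Polynomial.aeval_C,
        Algebra.algebraMap_eq_smul_one]
    have e2 := congrArg (fun f : Module.End K V => f w) e
    simp only [map_sub, LinearMap.sub_apply, Module.End.mul_apply, LinearMap.smul_apply,
      Module.End.one_apply, Polynomial.aeval_C] at e2
    rw [Module.algebraMap_end_apply, ← hw0'def] at e2
    rw [e2]
    have hy : (Polynomial.aeval A h2) w ∈ G 0 := by rw [hG0]; trivial
    exact hflag 0 _ hy
  set w0 : V := c⁻¹ • w0' with hw0def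
  have hw0W : w0 ∈ W := W.smul_mem _ hw0'W
  have hw0eig : A w0 = θ 0 • w0 := by
    rw [hw0def, map_smul, hw0'eig, smul_comm]
  have hwdiff : w - w0 ∈ G 1 := by
    have := (G 1).smul_mem c⁻¹ hcw
    rwa [smul_sub, smul_smul, inv_mul_cancel₀ hc, one_smul, ← hw0def] at this
  have hw0ne : w0 ≠ 0 := by
    intro h
    apply hwG1
    rw [h, sub_zero] at hwdiff
    exact hwdiff
  have hw0G1 : w0 ∉ G 1 := fun h => hw0ne (heigz w0 hw0eig h)
  -- final argument via the quotient V ⧸ G 1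
  intro v hv
  have hveig : A v = θ 0 • v := by
    have h := Module.End.mem_eigenspace_iff.mp hv
    have e : θ 0 = q ^ (-(d : ℤ)) := by
      simp only [hθdef]
      norm_num
    rw [e]
    exact h
  set π := (G 1).mkQ with hπdef
  have hQfin : Module.finrank K (V ⧸ G 1) ≤ 1 := by
    have htop : G 1 ⊔ U 0 = ⊤ := by
      rw [eq_top_iff, ← hUtop]
      refine iSup_le fun j => ?_
      cases j with
      | zero => exact le_sup_right
      | succ j => exact le_sup_of_le_left (hUG j 1)
    have hmap : Submodule.map π (U 0) = ⊤ := by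
      rw [hπdef, Submodule.map_mkQ_eq_top]
      exact htop
    calc Module.finrank K (V ⧸ G 1)
        = Module.finrank K (⊤ : Submodule K (V ⧸ G 1)) := (finrank_top K _).symm
      _ = Module.finrank K (Submodule.map π (U 0)) := by rw [hmap]
      _ ≤ Module.finrank K (U 0) := Submodule.finrank_map_le π (U 0)
      _ = 1 := hU0
  have hπw0 : π w0 ≠ 0 := by
    intro h
    rw [hπdef, Submodule.mkQ_apply, Submodule.Quotient.mk_eq_zero] at h
    exact hw0G1 h
  have hspan : Submodule.span K {π w0} = ⊤ := by
    apply Submodule.eq_top_of_finrank_eq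
    rw [finrank_span_singleton hπw0]
    have h1 : 1 ≤ Module.finrank K (V ⧸ G 1) := by
      have := Submodule.finrank_le (Submodule.span K {π w0})
      rw [finrank_span_singleton hπw0] at this
      exact this
    omega
  have hπv : π v ∈ Submodule.span K {π w0} := by rw [hspan]; trivial
  obtain ⟨t, ht⟩ := Submodule.mem_span_singleton.mp hπv
  have hvt : v - t • w0 ∈ G 1 := by
    have : π (v - t • w0) = 0 := by
      rw [map_sub, map_smul, ht, sub_self]
    rwa [hπdef, Submodule.mkQ_apply, Submodule.Quotient.mk_eq_zero] at this
  have hvteig : A (v - t • w0) = θ 0 • (v - t • w0) := by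
    rw [map_sub, map_smul, hveig, hw0eig, smul_sub, smul_comm]
  have hz := heigz _ hvteig hvt
  have : v = t • w0 := by
    have := sub_eq_zero.mp hz
    exact this
  rw [this]
  exact W.smul_mem t hw0W
end
end

section
/- In the Setup, let K : V → V denote the linear map acting on U_i as multiplication by q^{2i−d} for 0 ≤ i ≤ d (so A = R + K and A* = L + K⁻¹). Assume additionally: A and A* satisfy the cubic q-Serre relations; dim U_0 = 1; σ_0, …, σ_d ∈ 𝕂 are scalars such that Lⁱ Rⁱ u = σ_i u for all u ∈ U_0 and 0 ≤ i ≤ d; and the only subspaces of V invariant under each of R, L and K are 0 and V. Then the following are equivalent: (i) the only subspaces W ⊆ V with AW ⊆ W and A*W ⊆ W are 0 and V; (ii) ∑_{i=0}^{d} (−1)ⁱ σ_i qⁱ ([i]_q!)⁻² (q⁻¹(q − q⁻¹)⁻²)ⁱ ≠ 0. -/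
noncomputable section

namespace TDAux

structure Ctx (K V : Type*) [Field K] [AddCommGroup V] [Module K V] where
  q : K
  d : ℕ
  U : ℕ → Submodule K V
  Rm : Module.End K V
  Lm : Module.End K V
  Am : Module.End K V
  Asm : Module.End K V
  E : ℕ → Module.End K V
  u : V
  uc : V →ₗ[K] K
  hq : q ≠ 0
  hq1 : ∀ n : ℕ, 0 < n → q ^ n ≠ 1
  hUne : ∀ i, i ≤ d → U i ≠ ⊥
  hUbot : ∀ i, d < i → U i = ⊥
  htop : (⨆ i, U i) = ⊤
  hR : ∀ i, Submodule.map Rm (U i) ≤ U (i + 1)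
  hL : ∀ i, Submodule.map Lm (U (i + 1)) ≤ U i
  hL0 : ∀ x ∈ U 0, Lm x = 0
  hA : ∀ i, ∀ x ∈ U i, Am x = Rm x + (q ^ (2 * (i : ℤ) - d)) • x
  hAs : ∀ i, ∀ x ∈ U i, Asm x = Lm x + (q ^ ((d : ℤ) - 2 * (i : ℤ))) • x
  hE1 : ∀ i x, E i x ∈ U i
  hE2 : ∀ i, ∀ x ∈ U i, E i x = x
  hE3 : ∀ i j, j ≠ i → ∀ x ∈ U j, E i x = 0
  hu : u ∈ U 0
  hune : u ≠ 0
  hucu : uc u = 1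
  hucU0 : ∀ x ∈ U 0, x = uc x • u
  hucE : ∀ j, j ≠ 0 → ∀ x ∈ U j, uc x = 0

variable {K V : Type*} [Field K] [AddCommGroup V] [Module K V]

namespace Ctx
variable (C : Ctx K V)

/-- the eigenvalue `θ_i = q^(2i-d)` -/
def th (i : ℕ) : K := C.q ^ (2 * (i : ℤ) - C.d)
/-- the eigenvalue `θ*_i = q^(d-2i)` -/
def ths (i : ℕ) : K := C.q ^ ((C.d : ℤ) - 2 * (i : ℤ))

lemma hA' (i : ℕ) (x : V) (hx : x ∈ C.U i) : C.Am x = C.Rm x + C.th i • x := C.hA i x hx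
lemma hAs' (i : ℕ) (x : V) (hx : x ∈ C.U i) : C.Asm x = C.Lm x + C.ths i • x := C.hAs i x hx

lemma zpow_inj {a b : ℤ} (h : (C.q : K) ^ a = C.q ^ b) : a = b := by
  by_contra hne
  rcases lt_or_gt_of_ne hne with hlt | hlt
  · have h1 : C.q ^ (b - a) = 1 := by
      rw [zpow_sub₀ C.hq, h, div_self (zpow_ne_zero _ C.hq)]
    obtain ⟨n, hn⟩ : ∃ n : ℕ, (b - a : ℤ) = (n : ℤ) ∧ 0 < n := by
      refine ⟨(b - a).toNat, ?_, ?_⟩ <;> omega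
    have := C.hq1 n hn.2
    rw [hn.1, zpow_natCast] at h1; exact this h1
  · have h1 : C.q ^ (a - b) = 1 := by
      rw [zpow_sub₀ C.hq, h, div_self (zpow_ne_zero _ C.hq)]
    obtain ⟨n, hn⟩ : ∃ n : ℕ, (a - b : ℤ) = (n : ℤ) ∧ 0 < n := by
      refine ⟨(a - b).toNat, ?_, ?_⟩ <;> omega
    have := C.hq1 n hn.2
    rw [hn.1, zpow_natCast] at h1; exact this h1

lemma th_inj {i j : ℕ} (h : C.th i = C.th j) : i = j := by
  have := C.zpow_inj h; omega
lemma ths_inj {i j : ℕ} (h : C.ths i = C.ths j) : i = j := by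
  have := C.zpow_inj h; omega
lemma th_ne {i j : ℕ} (h : i ≠ j) : C.th i ≠ C.th j := fun hc => h (C.th_inj hc)
lemma ths_ne {i j : ℕ} (h : i ≠ j) : C.ths i ≠ C.ths j := fun hc => h (C.ths_inj hc)
lemma th_ne_zero (i : ℕ) : C.th i ≠ 0 := zpow_ne_zero _ C.hq
lemma ths_ne_zero (i : ℕ) : C.ths i ≠ 0 := zpow_ne_zero _ C.hq

lemma qq_ne : C.q - C.q⁻¹ ≠ 0 := by
  intro h
  have h2 : C.q ^ (2:ℕ) = 1 := by
    have hq := C.hq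
    field_simp at h
    rw [mul_zero] at h; exact sub_eq_zero.mp h
  exact C.hq1 2 (by norm_num) h2

section Basic
/-- two endomorphisms agreeing on every `U j` are equal -/
lemma endExt {f g : Module.End K V} (h : ∀ j, ∀ x ∈ C.U j, f x = g x) : f = g := by
  apply LinearMap.ext
  intro x
  have hx : x ∈ (⨆ i, C.U i) := by rw [C.htop]; exact Submodule.mem_top
  refine Submodule.iSup_induction (motive := fun y => f y = g y) C.U hx (fun i y hy => h i y hy) (by simp) ?_
  intro a b ha hb
  rw [map_add, map_add, ha, hb]

lemma mem_bot_high {j : ℕ} (h : C.d < j) {x : V} (hx : x ∈ C.U j) : x = 0 := by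
  rw [C.hUbot j h] at hx; simpa using hx

lemma sumE : (∑ i ∈ Finset.range (C.d + 1), C.E i) = (1 : Module.End K V) := by
  apply C.endExt
  intro j x hx
  rcases le_or_gt j C.d with hj | hj
  · rw [LinearMap.sum_apply, Module.End.one_apply]
    rw [Finset.sum_eq_single j]
    · exact C.hE2 j x hx
    · intro i _ hij; exact C.hE3 i j (Ne.symm hij) x hx
    · intro hmem; exact absurd (Finset.mem_range.mpr (by omega)) hmem
  · have : x = 0 := C.mem_bot_high hj hx
    simp [this]

lemma sumE_apply (x : V) : (∑ i ∈ Finset.range (C.d + 1), C.E i x) = x := by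
  have := congrArg (fun f : Module.End K V => f x) C.sumE
  simpa using this

lemma Rmem {j : ℕ} {x : V} (hx : x ∈ C.U j) : C.Rm x ∈ C.U (j + 1) :=
  C.hR j (Submodule.mem_map_of_mem hx)
lemma Lmem' {j : ℕ} {x : V} (hx : x ∈ C.U (j + 1)) : C.Lm x ∈ C.U j :=
  C.hL j (Submodule.mem_map_of_mem hx)
lemma Lmem {j : ℕ} {x : V} (hx : x ∈ C.U j) : C.Lm x ∈ C.U (j - 1) := by
  cases j with
  | zero => rw [C.hL0 x hx]; exact Submodule.zero_mem _
  | succ n => exact C.Lmem' hx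

lemma Rpow (i : ℕ) : (C.Rm ^ i) C.u ∈ C.U i := by
  induction i with
  | zero => simpa using C.hu
  | succ n ih => rw [pow_succ', Module.End.mul_apply]
                 exact C.Rmem ih

lemma ER (i : ℕ) : C.E (i + 1) * C.Rm = C.Rm * C.E i := by
  apply C.endExt
  intro j x hx
  rw [Module.End.mul_apply, Module.End.mul_apply]
  by_cases hji : j = i
  · subst hji
    rw [C.hE2 j x hx, C.hE2 (j+1) _ (C.Rmem hx)]
  · rw [C.hE3 i j hji x hx, map_zero, C.hE3 (i+1) (j+1) (by omega) _ (C.Rmem hx)]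

lemma ER0 : C.E 0 * C.Rm = 0 := by
  apply C.endExt
  intro j x hx
  rw [Module.End.mul_apply, C.hE3 0 (j+1) (by omega) _ (C.Rmem hx)]
  simp

lemma EL (i : ℕ) : C.E i * C.Lm = C.Lm * C.E (i + 1) := by
  apply C.endExt
  intro j x hx
  rw [Module.End.mul_apply, Module.End.mul_apply]
  by_cases hji : j = i + 1
  · subst hji
    rw [C.hE2 (i+1) x hx, C.hE2 i _ (C.Lmem' hx)]
  · rw [C.hE3 (i+1) j hji x hx, map_zero]
    cases j with
    | zero => rw [C.hL0 x hx, map_zero]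
    | succ n => exact C.hE3 i n (by omega) _ (C.Lmem' hx)

lemma EE (i j : ℕ) (x : V) : C.E i (C.E j x) = if i = j then C.E j x else 0 := by
  by_cases h : i = j
  · subst h; rw [if_pos rfl]; exact C.hE2 i _ (C.hE1 i x)
  · rw [if_neg h]; exact C.hE3 i j (fun hc => h hc.symm) _ (C.hE1 j x)

lemma EAm0 : C.E 0 * C.Am = C.th 0 • C.E 0 := by
  apply C.endExt
  intro j x hx
  rw [Module.End.mul_apply, LinearMap.smul_apply]
  rw [C.hA' j x hx, map_add, map_smul]
  rw [C.hE3 0 (j+1) (by omega) _ (C.Rmem hx), zero_add]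
  by_cases hj : j = 0
  · subst hj; rfl
  · rw [C.hE3 0 j hj x hx]; simp

lemma EAmS (i : ℕ) : C.E (i + 1) * C.Am = C.Rm * C.E i + C.th (i + 1) • C.E (i + 1) := by
  apply C.endExt
  intro j x hx
  rw [Module.End.mul_apply, LinearMap.add_apply, Module.End.mul_apply, LinearMap.smul_apply]
  rw [C.hA' j x hx, map_add, map_smul]
  by_cases hji : j = i
  · subst hji
    rw [C.hE2 (j+1) _ (C.Rmem hx), C.hE2 j x hx, C.hE3 (j+1) j (by omega) x hx]
    simp
  · rw [C.hE3 (i+1) (j+1) (by omega) _ (C.Rmem hx), C.hE3 i j hji x hx, map_zero, zero_add,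
      zero_add]
    by_cases hji1 : j = i + 1
    · subst hji1; rw [C.hE2 (i+1) x hx]
    · rw [C.hE3 (i+1) j hji1 x hx]; simp

lemma EAs (i : ℕ) : C.E i * C.Asm = C.Lm * C.E (i + 1) + C.ths i • C.E i := by
  apply C.endExt
  intro j x hx
  rw [Module.End.mul_apply, LinearMap.add_apply, Module.End.mul_apply, LinearMap.smul_apply]
  rw [C.hAs' j x hx, map_add, map_smul]
  by_cases hji : j = i + 1
  · subst hji
    rw [C.hE2 (i+1) x hx, C.hE2 i _ (C.Lmem' hx), C.hE3 i (i+1) (by omega) x hx]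
    simp
  · have h1 : C.E (i+1) x = 0 := C.hE3 (i+1) j hji x hx
    have hEiL : C.E i (C.Lm x) = 0 := by
      cases j with
      | zero => rw [C.hL0 x hx, map_zero]
      | succ n => exact C.hE3 i n (by omega) _ (C.Lmem' hx)
    rw [h1, map_zero, hEiL, zero_add, zero_add]
    by_cases hji2 : j = i
    · subst hji2; rfl
    · rw [C.hE3 i j hji2 x hx]; simp
end Basic

/-- linear functionals agreeing on every `U j` are equal -/
lemma lfExt {f g : V →ₗ[K] K} (h : ∀ j, ∀ x ∈ C.U j, f x = g x) : f = g := by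
  apply LinearMap.ext
  intro x
  have hx : x ∈ (⨆ i, C.U i) := by rw [C.htop]; exact Submodule.mem_top
  refine Submodule.iSup_induction (motive := fun y => f y = g y) C.U hx (fun i y hy => h i y hy) (by simp) ?_
  intro a b ha hb
  rw [map_add, map_add, ha, hb]

end Ctx

/-- coefficients of the `A`-eigenvector `v` -/
def Ctx.c (C : Ctx K V) : ℕ → K
  | 0 => 1
  | (i+1) => -(C.th (i+1) - C.th 0)⁻¹ * Ctx.c C i

/-- coefficients of the `A*`-eigenfunctional `f` -/
def Ctx.cs (C : Ctx K V) : ℕ → K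
  | 0 => 1
  | (i+1) => -(C.ths (i+1) - C.ths 0)⁻¹ * Ctx.cs C i

namespace Ctx
variable (C : Ctx K V)

lemma c_zero : C.c 0 = 1 := rfl
lemma cs_zero : C.cs 0 = 1 := rfl
lemma c_succ (i : ℕ) : C.c (i+1) = -(C.th (i+1) - C.th 0)⁻¹ * C.c i := rfl
lemma cs_succ (i : ℕ) : C.cs (i+1) = -(C.ths (i+1) - C.ths 0)⁻¹ * C.cs i := rfl

lemma c_succ_eq (i : ℕ) : (C.th (i+1) - C.th 0) * C.c (i+1) = - C.c i := by
  have hne : C.th (i + 1) - C.th 0 ≠ 0 := sub_ne_zero.mpr (C.th_ne (by omega))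
  rw [c_succ, ← mul_assoc, mul_neg, mul_inv_cancel₀ hne, neg_one_mul]

lemma cs_succ_eq (i : ℕ) : (C.ths (i+1) - C.ths 0) * C.cs (i+1) = - C.cs i := by
  have hne : C.ths (i + 1) - C.ths 0 ≠ 0 := sub_ne_zero.mpr (C.ths_ne (by omega))
  rw [cs_succ, ← mul_assoc, mul_neg, mul_inv_cancel₀ hne, neg_one_mul]

lemma c_ne_zero (i : ℕ) : C.c i ≠ 0 := by
  induction i with
  | zero => rw [c_zero]; exact one_ne_zero
  | succ n ih =>
      have hne : C.th (n+1) - C.th 0 ≠ 0 := sub_ne_zero.mpr (C.th_ne (by omega))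
      rw [c_succ]
      exact mul_ne_zero (neg_ne_zero.mpr (inv_ne_zero hne)) ih

lemma cs_ne_zero (i : ℕ) : C.cs i ≠ 0 := by
  induction i with
  | zero => rw [cs_zero]; exact one_ne_zero
  | succ n ih =>
      have hne : C.ths (n+1) - C.ths 0 ≠ 0 := sub_ne_zero.mpr (C.ths_ne (by omega))
      rw [cs_succ]
      exact mul_ne_zero (neg_ne_zero.mpr (inv_ne_zero hne)) ih

/-- the `A`-eigenvector with eigenvalue `θ_0` -/
def vv : V := ∑ i ∈ Finset.range (C.d + 1), C.c i • ((C.Rm ^ i) C.u)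

lemma Etriv {i : ℕ} (hi : C.d < i) (y : V) : C.E i y = 0 := by
  have := C.hE1 i y
  rw [C.hUbot i hi] at this
  simpa using this

lemma vecExt {x y : V} (h : ∀ i, C.E i x = C.E i y) : x = y := by
  rw [← C.sumE_apply x, ← C.sumE_apply y]
  exact Finset.sum_congr rfl (fun i _ => h i)

lemma E_vv (i : ℕ) (hi : i ≤ C.d) : C.E i C.vv = C.c i • ((C.Rm ^ i) C.u) := by
  unfold vv
  rw [map_sum]
  rw [Finset.sum_eq_single i]
  · rw [map_smul, C.hE2 i _ (C.Rpow i)]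
  · intro j _ hij
    rw [map_smul, C.hE3 i j hij _ (C.Rpow j), smul_zero]
  · intro h; exact absurd (Finset.mem_range.mpr (by omega)) h

lemma Rpow_top : (C.Rm ^ (C.d + 1)) C.u = 0 := C.mem_bot_high (by omega) (C.Rpow (C.d+1))

lemma Am_vv : C.Am C.vv = C.th 0 • C.vv := by
  apply C.vecExt
  intro i
  rcases Nat.lt_or_ge C.d i with hi | hi
  · rw [C.Etriv hi, map_smul, C.Etriv hi, smul_zero]
  · rw [map_smul]
    cases i with
    | zero =>
        have h0 := congrArg (fun f : Module.End K V => f C.vv) C.EAm0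
        simp only [Module.End.mul_apply, LinearMap.smul_apply] at h0
        rw [h0]
    | succ n =>
        have h0 := congrArg (fun f : Module.End K V => f C.vv) (C.EAmS n)
        simp only [Module.End.mul_apply, LinearMap.add_apply, LinearMap.smul_apply] at h0
        rw [h0, C.E_vv (n+1) hi, C.E_vv n (by omega)]
        have hR : C.Rm (C.c n • (C.Rm ^ n) C.u) = C.c n • (C.Rm ^ (n+1)) C.u := by
          rw [map_smul, pow_succ', Module.End.mul_apply]
        rw [hR, smul_smul, smul_smul, ← add_smul]
        have hc : C.c n + C.th (n+1) * C.c (n+1) = C.th 0 * C.c (n+1) := by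
          linear_combination C.c_succ_eq n
        rw [hc]

lemma uc_vv : C.uc C.vv = 1 := by
  unfold vv
  rw [map_sum]
  rw [Finset.sum_eq_single 0]
  · rw [map_smul, c_zero, one_smul, pow_zero, Module.End.one_apply, C.hucu]
  · intro j _ hj
    rw [map_smul, C.hucE j hj _ (C.Rpow j), smul_zero]
  · intro h; exact absurd (Finset.mem_range.mpr (by omega)) h

lemma vv_ne_zero : C.vv ≠ 0 := by
  intro h
  have := C.uc_vv
  rw [h, map_zero] at this
  exact one_ne_zero this.symm

/-- the `A*`-eigenfunctional with eigenvalue `θ*_0` -/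
def ff : V →ₗ[K] K :=
  ∑ i ∈ Finset.range (C.d + 1), C.cs i • (C.uc ∘ₗ (C.Lm ^ i) ∘ₗ C.E i)

lemma ff_mem {j : ℕ} (hj : j ≤ C.d) {x : V} (hx : x ∈ C.U j) :
    C.ff x = C.cs j * C.uc ((C.Lm ^ j) x) := by
  unfold ff
  rw [LinearMap.sum_apply]
  rw [Finset.sum_eq_single j]
  · rw [LinearMap.smul_apply, LinearMap.comp_apply, LinearMap.comp_apply, C.hE2 j x hx,
      smul_eq_mul]
  · intro i _ hij
    rw [LinearMap.smul_apply, LinearMap.comp_apply, LinearMap.comp_apply,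
      C.hE3 i j (Ne.symm hij) x hx, map_zero, map_zero, smul_zero]
  · intro h; exact absurd (Finset.mem_range.mpr (by omega)) h

lemma ff_u : C.ff C.u = 1 := by
  rw [C.ff_mem (Nat.zero_le _) C.hu, cs_zero, pow_zero, Module.End.one_apply, C.hucu, one_mul]

lemma ff_U0 {x : V} (hx : x ∈ C.U 0) : C.ff x = C.uc x := by
  rw [C.ff_mem (Nat.zero_le _) hx, cs_zero, pow_zero, Module.End.one_apply, one_mul]

lemma ff_As : C.ff ∘ₗ C.Asm = C.ths 0 • C.ff := by
  apply C.lfExt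
  intro j x hx
  rcases Nat.lt_or_ge C.d j with hj | hj
  · have hx0 : x = 0 := C.mem_bot_high hj hx
    simp [hx0]
  · rw [LinearMap.comp_apply, LinearMap.smul_apply, smul_eq_mul]
    rw [C.hAs' j x hx, map_add, map_smul, smul_eq_mul]
    rw [C.ff_mem hj hx]
    cases j with
    | zero =>
        rw [C.hL0 x hx, map_zero, zero_add]
    | succ n =>
        have hLx : C.Lm x ∈ C.U n := C.Lmem' hx
        rw [C.ff_mem (by omega) hLx]
        have hLL : (C.Lm ^ n) (C.Lm x) = (C.Lm ^ (n+1)) x := by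
          rw [pow_succ, Module.End.mul_apply]
        rw [hLL]
        linear_combination C.uc ((C.Lm ^ (n+1)) x) * C.cs_succ_eq n

lemma ff_As_apply (x : V) : C.ff (C.Asm x) = C.ths 0 * C.ff x := by
  have := congrArg (fun g : V →ₗ[K] K => g x) C.ff_As
  simpa using this

section Eps

lemma qInt_mul (n : ℕ) : qInt C.q n * (C.q - C.q⁻¹) = C.q ^ n - C.q⁻¹ ^ n := by
  rw [qInt, div_mul_cancel₀ _ C.qq_ne]

lemma pow_pow_one (n : ℕ) : C.q ^ n * C.q⁻¹ ^ n = 1 := by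
  rw [← mul_pow, mul_inv_cancel₀ C.hq, one_pow]

lemma qInt_ne_zero (n : ℕ) (hn : 0 < n) : qInt C.q n ≠ 0 := by
  intro h
  have h2 : C.q ^ n - C.q⁻¹ ^ n = 0 := by
    rw [← C.qInt_mul n, h, zero_mul]
  have h3 : C.q ^ n * C.q ^ n = 1 := by
    have h4 : C.q ^ n = C.q⁻¹ ^ n := sub_eq_zero.mp h2
    calc C.q ^ n * C.q ^ n = C.q ^ n * C.q⁻¹ ^ n := by rw [← h4]
    _ = 1 := C.pow_pow_one n
  have h5 : C.q ^ (2 * n) = 1 := by rw [two_mul, pow_add, h3]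
  exact C.hq1 (2*n) (by omega) h5

lemma qFac_succ (n : ℕ) : qFac C.q (n+1) = qFac C.q n * qInt C.q (n+1) := by
  rw [qFac, qFac, Finset.prod_range_succ]

lemma qFac_ne_zero (n : ℕ) : qFac C.q n ≠ 0 := by
  induction n with
  | zero => rw [qFac]; simp
  | succ m ih => rw [C.qFac_succ]; exact mul_ne_zero ih (C.qInt_ne_zero (m+1) (by omega))

lemma th_mul_ths (i j : ℕ) :
    C.th i * C.ths j = C.q ^ (2 * (i:ℤ) - 2 * (j:ℤ)) := by
  rw [th, ths, ← zpow_add₀ C.hq]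
  congr 1
  ring

lemma qq_identity (i : ℕ) :
    (C.th (i+1) - C.th 0) * (C.ths (i+1) - C.ths 0) =
      -((C.q ^ (i+1) - C.q⁻¹ ^ (i+1)) ^ 2) := by
  have ha : C.th (i+1) * C.ths (i+1) = 1 := by
    rw [C.th_mul_ths]; norm_num
  have hb : C.th (i+1) * C.ths 0 = (C.q ^ (i+1)) ^ 2 := by
    rw [C.th_mul_ths]
    push_cast
    rw [← pow_mul, ← zpow_natCast C.q ((i+1)*2)]
    congr 1
    push_cast
    ring
  have hc : C.th 0 * C.ths (i+1) = (C.q⁻¹ ^ (i+1)) ^ 2 := by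
    rw [C.th_mul_ths]
    have hinv : C.q⁻¹ ^ ((i+1)*2) = C.q ^ (-(((i+1)*2 : ℕ) : ℤ)) := by
      rw [inv_pow, ← zpow_natCast, ← zpow_neg]
    rw [← pow_mul, hinv]
    congr 1
    push_cast
    ring
  have hd : C.th 0 * C.ths 0 = 1 := by
    rw [C.th_mul_ths]; norm_num
  have he : C.q ^ (i+1) * C.q⁻¹ ^ (i+1) = 1 := C.pow_pow_one (i+1)
  linear_combination ha + hd - hb - hc - 2 * he

lemma ccs' (i : ℕ) :
    C.c i * C.cs i * (qFac C.q i) ^ 2 * (((C.q - C.q⁻¹) ^ 2)) ^ i = (-1 : K) ^ i := by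
  induction i with
  | zero => simp [c_zero, cs_zero, qFac]
  | succ n ih =>
      have hx : C.th (n+1) - C.th 0 ≠ 0 := sub_ne_zero.mpr (C.th_ne (by omega))
      have hy : C.ths (n+1) - C.ths 0 ≠ 0 := sub_ne_zero.mpr (C.ths_ne (by omega))
      have hW : (C.q - C.q⁻¹) ^ 2 ≠ 0 := pow_ne_zero _ C.qq_ne
      have hI : qInt C.q (n+1) ≠ 0 := C.qInt_ne_zero (n+1) (by omega)
      have hxy : (C.th (n+1) - C.th 0) * (C.ths (n+1) - C.ths 0)
          = -((qInt C.q (n+1))^2 * (C.q - C.q⁻¹)^2) := by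
        rw [C.qq_identity n, ← C.qInt_mul (n+1)]
        ring
      have h2 : (C.th (n+1) - C.th 0)⁻¹ * (C.ths (n+1) - C.ths 0)⁻¹
          = -((qInt C.q (n+1))^2 * (C.q - C.q⁻¹)^2)⁻¹ := by
        rw [← mul_inv, hxy, inv_neg]
      have h3 : ((qInt C.q (n+1))^2 * (C.q - C.q⁻¹)^2)⁻¹ * ((qInt C.q (n+1))^2 * (C.q - C.q⁻¹)^2)
          = 1 := inv_mul_cancel₀ (mul_ne_zero (pow_ne_zero _ hI) hW)
      rw [c_succ, cs_succ, C.qFac_succ, pow_succ ((C.q - C.q⁻¹)^2) n, pow_succ (-1 : K) n]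
      linear_combination ((C.c n * C.cs n * (qFac C.q n)^2 * ((C.q - C.q⁻¹)^2)^n)
          * (qInt C.q (n+1))^2 * ((C.q - C.q⁻¹)^2)) * h2
        - (C.c n * C.cs n * (qFac C.q n)^2 * ((C.q - C.q⁻¹)^2)^n) * h3
        - ih

lemma ff_vv (σ : ℕ → K)
    (hσ : ∀ i, i ≤ C.d → ∀ x ∈ C.U 0, ((C.Lm ^ i) * (C.Rm ^ i)) x = σ i • x) :
    C.ff C.vv = ∑ i ∈ Finset.range (C.d + 1),
      (-1 : K) ^ i * σ i * C.q ^ i * ((qFac C.q i) ^ 2)⁻¹ *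
        (C.q⁻¹ * ((C.q - C.q⁻¹) ^ 2)⁻¹) ^ i := by
  unfold vv
  rw [map_sum]
  refine Finset.sum_congr rfl ?_
  intro i hi
  have hi' : i ≤ C.d := by
    have := Finset.mem_range.mp hi; omega
  rw [map_smul, C.ff_mem hi' (C.Rpow i), smul_eq_mul]
  have hLR : (C.Lm ^ i) ((C.Rm ^ i) C.u) = σ i • C.u := by
    have := hσ i hi' C.u C.hu
    rwa [Module.End.mul_apply] at this
  rw [hLR, map_smul, C.hucu, smul_eq_mul, mul_one]
  -- goal : c i * (cs i * σ i) = (-1)^i * σ i * q^i * ((qFac q i)^2)⁻¹ * (q⁻¹ * ((q-q⁻¹)^2)⁻¹)^i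
  have h1 := C.ccs' i
  have hW : ((C.q - C.q⁻¹) ^ 2) ^ i ≠ 0 := pow_ne_zero _ (pow_ne_zero _ C.qq_ne)
  have hF : (qFac C.q i) ^ 2 ≠ 0 := pow_ne_zero _ (C.qFac_ne_zero i)
  have h2 : C.c i * C.cs i = (-1 : K)^i * ((qFac C.q i)^2 * ((C.q - C.q⁻¹)^2)^i)⁻¹ := by
    rw [eq_mul_inv_iff_mul_eq₀ (mul_ne_zero hF hW), ← mul_assoc, h1]
  have h4 : ((qFac C.q i)^2)⁻¹ * (((C.q - C.q⁻¹)^2)^i)⁻¹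
      = ((qFac C.q i)^2 * ((C.q - C.q⁻¹)^2)^i)⁻¹ := (mul_inv _ _).symm
  have hT : (C.q⁻¹ * ((C.q - C.q⁻¹)^2)⁻¹)^i = (C.q ^ i)⁻¹ * (((C.q - C.q⁻¹)^2)^i)⁻¹ := by
    rw [mul_pow, inv_pow, inv_pow]
  have he : C.q ^ i * (C.q ^ i)⁻¹ = 1 := mul_inv_cancel₀ (pow_ne_zero i C.hq)
  rw [hT]
  linear_combination (σ i) * h2
    - ((-1 : K)^i * σ i) * h4
    - ((-1 : K)^i * σ i * ((qFac C.q i)^2)⁻¹ * (((C.q - C.q⁻¹)^2)^i)⁻¹) * he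

end Eps

section Flags

/-- `U 0 + ... + U k` -/
def Fsub (k : ℕ) : Submodule K V := ⨆ j, ⨆ (_ : j ≤ k), C.U j
/-- `U k + U (k+1) + ...` -/
def Gsub (k : ℕ) : Submodule K V := ⨆ j, ⨆ (_ : k ≤ j), C.U j

lemma U_le_Fsub {j k : ℕ} (hj : j ≤ k) : C.U j ≤ C.Fsub k :=
  le_iSup_of_le j (le_iSup_of_le hj le_rfl)
lemma U_le_Gsub {j k : ℕ} (hj : k ≤ j) : C.U j ≤ C.Gsub k :=
  le_iSup_of_le j (le_iSup_of_le hj le_rfl)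

lemma Fsub_mono {k l : ℕ} (h : k ≤ l) : C.Fsub k ≤ C.Fsub l := by
  refine iSup₂_le fun j hj => C.U_le_Fsub (le_trans hj h)
lemma Gsub_anti {k l : ℕ} (h : k ≤ l) : C.Gsub l ≤ C.Gsub k := by
  refine iSup₂_le fun j hj => C.U_le_Gsub (le_trans h hj)

lemma Fsub_top : C.Fsub C.d = ⊤ := by
  rw [← top_le_iff, ← C.htop]
  refine iSup_le fun j => ?_
  rcases le_or_gt j C.d with hj | hj
  · exact C.U_le_Fsub hj
  · rw [C.hUbot j hj]; exact bot_le

lemma Gsub_zero : C.Gsub 0 = ⊤ := by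
  rw [← top_le_iff, ← C.htop]
  exact iSup_le fun j => C.U_le_Gsub (Nat.zero_le j)

lemma Gsub_bot {k : ℕ} (hk : C.d < k) : C.Gsub k = ⊥ := by
  rw [← le_bot_iff]
  refine iSup₂_le fun j hj => ?_
  rw [C.hUbot j (by omega)]

lemma Fsub_zero : C.Fsub 0 = C.U 0 := by
  apply le_antisymm
  · refine iSup₂_le fun j hj => ?_
    interval_cases j
    exact le_rfl
  · exact C.U_le_Fsub le_rfl

lemma mem_top' (x : V) : x ∈ C.Gsub 0 := by rw [C.Gsub_zero]; exact Submodule.mem_top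

lemma mapGsub (k : ℕ) :
    Submodule.map (C.Am - C.th k • (1 : Module.End K V)) (C.Gsub k) ≤ C.Gsub (k+1) := by
  rw [Gsub, Submodule.map_iSup]
  refine iSup_le fun j => ?_
  rw [Submodule.map_iSup]
  refine iSup_le fun hj => ?_
  rintro y ⟨x, hx, rfl⟩
  have hval : (C.Am - C.th k • (1 : Module.End K V)) x = C.Rm x + (C.th j - C.th k) • x := by
    rw [LinearMap.sub_apply, LinearMap.smul_apply, Module.End.one_apply, C.hA' j x hx, sub_smul]
    abel
  rw [hval]
  refine Submodule.add_mem _ (C.U_le_Gsub (by omega) (C.Rmem hx)) ?_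
  rcases eq_or_lt_of_le hj with hjk | hjk
  · rw [← hjk, sub_self, zero_smul]; exact Submodule.zero_mem _
  · exact Submodule.smul_mem _ _ (C.U_le_Gsub (by omega) hx)

lemma mapFsub (k : ℕ) :
    Submodule.map (C.Asm - C.ths (k+1) • (1 : Module.End K V)) (C.Fsub (k+1)) ≤ C.Fsub k := by
  rw [Fsub, Submodule.map_iSup]
  refine iSup_le fun j => ?_
  rw [Submodule.map_iSup]
  refine iSup_le fun hj => ?_
  rintro y ⟨x, hx, rfl⟩
  have hval : (C.Asm - C.ths (k+1) • (1 : Module.End K V)) x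
      = C.Lm x + (C.ths j - C.ths (k+1)) • x := by
    rw [LinearMap.sub_apply, LinearMap.smul_apply, Module.End.one_apply, C.hAs' j x hx, sub_smul]
    abel
  rw [hval]
  refine Submodule.add_mem _ (C.U_le_Fsub (by omega : j - 1 ≤ k) (C.Lmem hx)) ?_
  rcases eq_or_lt_of_le hj with hjk | hjk
  · rw [hjk, sub_self, zero_smul]; exact Submodule.zero_mem _
  · exact Submodule.smul_mem _ _ (C.U_le_Fsub (by omega) hx)

lemma mapFsub_zero (x : V) (hx : x ∈ C.Fsub 0) :
    (C.Asm - C.ths 0 • (1 : Module.End K V)) x = 0 := by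
  rw [C.Fsub_zero] at hx
  rw [LinearMap.sub_apply, LinearMap.smul_apply, Module.End.one_apply, C.hAs' 0 x hx, C.hL0 x hx,
    zero_add, sub_self]

end Flags

end Ctx

/-- `(A - θ_k) ⋯ (A - θ_1) (A - θ_0)` -/
def Ctx.PA (C : Ctx K V) : ℕ → Module.End K V
  | 0 => 1
  | (k+1) => (C.Am - C.th k • (1 : Module.End K V)) * Ctx.PA C k

/-- `(A - θ_k) ⋯ (A - θ_1)` -/
def Ctx.QA (C : Ctx K V) : ℕ → Module.End K V
  | 0 => 1
  | (k+1) => (C.Am - C.th (k+1) • (1 : Module.End K V)) * Ctx.QA C k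

/-- `(A* - θ*_0) (A* - θ*_1) ⋯ (A* - θ*_k)` -/
def Ctx.DAs (C : Ctx K V) : ℕ → Module.End K V
  | 0 => C.Asm - C.ths 0 • (1 : Module.End K V)
  | (k+1) => Ctx.DAs C k * (C.Asm - C.ths (k+1) • (1 : Module.End K V))

/-- `(A* - θ*_k) ⋯ (A* - θ*_1)` -/
def Ctx.QAs (C : Ctx K V) : ℕ → Module.End K V
  | 0 => 1
  | (k+1) => (C.Asm - C.ths (k+1) • (1 : Module.End K V)) * Ctx.QAs C k

namespace Ctx
variable (C : Ctx K V)

lemma PA_mem (k : ℕ) (x : V) : C.PA k x ∈ C.Gsub k := by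
  induction k with
  | zero => exact C.mem_top' x
  | succ n ih =>
      show ((C.Am - C.th n • (1 : Module.End K V)) * C.PA n) x ∈ C.Gsub (n+1)
      rw [Module.End.mul_apply]
      exact C.mapGsub n (Submodule.mem_map_of_mem ih)

lemma PA_top (x : V) : C.PA (C.d + 1) x = 0 := by
  have h := C.PA_mem (C.d + 1) x
  rw [C.Gsub_bot (by omega)] at h
  simpa using h

lemma QA_mul (k : ℕ) :
    C.QA k * (C.Am - C.th 0 • (1 : Module.End K V)) = C.PA (k+1) := by
  induction k with
  | zero =>
      show (1 : Module.End K V) * _ = _ * (1 : Module.End K V)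
      rw [one_mul, mul_one]
  | succ n ih =>
      show (C.Am - C.th (n+1) • (1 : Module.End K V)) * C.QA n * _ = _
      rw [mul_assoc, ih]
      rfl

lemma commSub (T : Module.End K V) (a b : K) :
    Commute (T - a • (1 : Module.End K V)) (T - b • (1 : Module.End K V)) := by
  have h1 : Commute T ((1 : Module.End K V)) := Commute.one_right T
  have h2 : Commute T (b • (1 : Module.End K V)) := h1.smul_right b
  have h3 : Commute (a • (1 : Module.End K V)) T := (Commute.one_left T).smul_left a
  have h4 : Commute (a • (1 : Module.End K V)) (b • (1 : Module.End K V)) :=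
    (((Commute.refl (1 : Module.End K V)).smul_left a).smul_right b)
  exact ((Commute.refl T).sub_right h2).sub_left (h3.sub_right h4)

lemma commAsAs (a b : K) :
    Commute (C.Asm - a • (1 : Module.End K V)) (C.Asm - b • (1 : Module.End K V)) :=
  commSub C.Asm a b

lemma commAmAm (a b : K) :
    Commute (C.Am - a • (1 : Module.End K V)) (C.Am - b • (1 : Module.End K V)) :=
  commSub C.Am a b

lemma commQAs (a : K) (k : ℕ) :
    Commute (C.Asm - a • (1 : Module.End K V)) (C.QAs k) := by
  induction k with
  | zero => exact Commute.one_right _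
  | succ n ih => exact (C.commAsAs a (C.ths (n+1))).mul_right ih

lemma commQA (a : K) (k : ℕ) :
    Commute (C.Am - a • (1 : Module.End K V)) (C.QA k) := by
  induction k with
  | zero => exact Commute.one_right _
  | succ n ih => exact (C.commAmAm a (C.th (n+1))).mul_right ih

lemma PA_d1_zero : (C.Am - C.th 0 • (1 : Module.End K V)) * C.QA C.d = 0 := by
  rw [(C.commQA (C.th 0) C.d).eq, C.QA_mul]
  apply LinearMap.ext
  intro x
  exact C.PA_top x

lemma DAs_van (k : ℕ) : ∀ x ∈ C.Fsub k, C.DAs k x = 0 := by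
  induction k with
  | zero => exact fun x hx => C.mapFsub_zero x hx
  | succ n ih =>
      intro x hx
      show (C.DAs n * (C.Asm - C.ths (n+1) • (1 : Module.End K V))) x = 0
      rw [Module.End.mul_apply]
      exact ih _ (C.mapFsub n (Submodule.mem_map_of_mem hx))

lemma DAs_eq_QAs (k : ℕ) :
    C.DAs k = (C.Asm - C.ths 0 • (1 : Module.End K V)) * C.QAs k := by
  induction k with
  | zero =>
      show C.DAs 0 = _ * (1 : Module.End K V)
      rw [mul_one]; rfl
  | succ n ih =>
      show C.DAs n * (C.Asm - C.ths (n+1) • (1 : Module.End K V)) = _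
      rw [ih, mul_assoc]
      congr 1
      show _ = (C.Asm - C.ths (n+1) • (1 : Module.End K V)) * C.QAs n
      rw [(C.commQAs (C.ths (n+1)) n).eq]

lemma DAs_d_zero : (C.Asm - C.ths 0 • (1 : Module.End K V)) * C.QAs C.d = 0 := by
  rw [← C.DAs_eq_QAs]
  apply LinearMap.ext
  intro x
  have hx : x ∈ C.Fsub C.d := by rw [C.Fsub_top]; exact Submodule.mem_top
  exact C.DAs_van C.d x hx

lemma uc_E0 (x : V) : C.uc (C.E 0 x) = C.uc x := by
  have h1 : C.uc x = ∑ i ∈ Finset.range (C.d + 1), C.uc (C.E i x) := by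
    conv_lhs => rw [← C.sumE_apply x]
    rw [map_sum]
  rw [h1, Finset.sum_eq_single_of_mem 0 (Finset.mem_range.mpr (by omega))]
  intro i _ hi
  exact C.hucE i hi _ (C.hE1 i x)

/-- the kernel of `A - θ_0` is spanned by `v` -/
lemma kerA0 {x : V} (hx : C.Am x = C.th 0 • x) : x = C.uc x • C.vv := by
  have hcomp : ∀ i, C.E i x = C.uc x • C.c i • ((C.Rm ^ i) C.u) := by
    intro i
    induction i with
    | zero =>
        have h0 : C.E 0 x = C.uc (C.E 0 x) • C.u := C.hucU0 _ (C.hE1 0 x)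
        rw [h0, C.uc_E0, c_zero, one_smul]
        rfl
    | succ n ih =>
        have h1 := congrArg (fun f : Module.End K V => f x) (C.EAmS n)
        simp only [Module.End.mul_apply, LinearMap.add_apply, LinearMap.smul_apply] at h1
        rw [hx, map_smul] at h1
        -- h1 : th 0 • E (n+1) x = Rm (E n x) + th (n+1) • E (n+1) x
        have hne : C.th (n+1) - C.th 0 ≠ 0 := sub_ne_zero.mpr (C.th_ne (by omega))
        have h1' : C.Rm (C.E n x) = C.th 0 • C.E (n+1) x - C.th (n+1) • C.E (n+1) x :=
          eq_sub_of_add_eq h1.symm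
        have hco : (-(C.th (n+1) - C.th 0)⁻¹) * C.th 0 - (-(C.th (n+1) - C.th 0)⁻¹) * C.th (n+1)
            = 1 := by
          field_simp
          ring
        have h3 : C.E (n+1) x = -(C.th (n+1) - C.th 0)⁻¹ • C.Rm (C.E n x) := by
          rw [h1', smul_sub, smul_smul, smul_smul, ← sub_smul, hco, one_smul]
        have hRR : C.Rm ((C.Rm ^ n) C.u) = (C.Rm ^ (n+1)) C.u := by
          rw [pow_succ', Module.End.mul_apply]
        rw [h3, ih, map_smul, map_smul, hRR, c_succ]
        rw [smul_smul, smul_smul, smul_smul]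
        congr 1
        ring
  calc x = ∑ i ∈ Finset.range (C.d + 1), C.E i x := (C.sumE_apply x).symm
  _ = ∑ i ∈ Finset.range (C.d + 1), C.uc x • C.c i • ((C.Rm ^ i) C.u) :=
      Finset.sum_congr rfl fun i _ => hcomp i
  _ = C.uc x • C.vv := by
      unfold vv
      rw [Finset.smul_sum]

/-- the kernel of `A* - θ*_0` is `U 0` -/
lemma kerAs0 {x : V} (hx : C.Asm x = C.ths 0 • x) : x ∈ C.U 0 := by
  have hdesc : ∀ m, ∀ i, 1 ≤ i → C.d + 1 - m ≤ i → C.E i x = 0 := by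
    intro m
    induction m with
    | zero => intro i hi1 hi2; exact C.Etriv (by omega) x
    | succ n ih =>
        intro i hi1 hi2
        rcases Nat.lt_or_ge i (C.d + 1 - n) with hlt | hge
        · -- i = d - n exactly
          have h1 := congrArg (fun f : Module.End K V => f x) (C.EAs i)
          simp only [Module.End.mul_apply, LinearMap.add_apply, LinearMap.smul_apply] at h1
          rw [hx, map_smul] at h1
          -- h1 : ths 0 • E i x = Lm (E (i+1) x) + ths i • E i x
          have h2 : C.E (i+1) x = 0 := ih (i+1) (by omega) (by omega)
          rw [h2, map_zero, zero_add] at h1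
          have h3 : (C.ths i - C.ths 0) • C.E i x = 0 := by
            rw [sub_smul, h1, sub_self]
          have hne : C.ths i - C.ths 0 ≠ 0 := sub_ne_zero.mpr (C.ths_ne (by omega))
          exact (smul_eq_zero.mp h3).resolve_left hne
        · exact ih i hi1 hge
  have hzero : ∀ i, 1 ≤ i → C.E i x = 0 := fun i hi => hdesc (C.d + 1) i hi (by omega)
  rw [← C.sumE_apply x,
    Finset.sum_eq_single_of_mem 0 (Finset.mem_range.mpr (by omega))
      (fun i _ hi => hzero i (by omega))]
  exact C.hE1 0 x

section DirB

lemma EKop (Kop : Module.End K V) (hK : ∀ i, ∀ x ∈ C.U i, Kop x = C.th i • x)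
    (j : ℕ) (x : V) : C.E j (Kop x) = C.th j • C.E j x := by
  have h : C.E j * Kop = C.th j • C.E j := by
    apply C.endExt
    intro m y hy
    rw [Module.End.mul_apply, LinearMap.smul_apply, hK m y hy, map_smul]
    by_cases hmj : m = j
    · subst hmj; rfl
    · rw [C.hE3 j m hmj y hy, smul_zero, smul_zero]
  have := congrArg (fun f : Module.End K V => f x) h
  simpa using this

lemma Lm_eq (x : V) :
    C.Lm x = C.Asm x - ∑ j ∈ Finset.range (C.d + 1), C.ths j • C.E j x := by
  have h : C.Lm = C.Asm - ∑ j ∈ Finset.range (C.d + 1), C.ths j • C.E j := by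
    apply C.endExt
    intro m y hy
    rw [LinearMap.sub_apply, LinearMap.sum_apply, C.hAs' m y hy]
    rcases le_or_gt m C.d with hm | hm
    · have hsum : (∑ j ∈ Finset.range (C.d + 1), (C.ths j • C.E j) y) = C.ths m • y := by
        rw [Finset.sum_eq_single_of_mem m (Finset.mem_range.mpr (by omega))]
        · rw [LinearMap.smul_apply, C.hE2 m y hy]
        · intro j _ hj
          rw [LinearMap.smul_apply, C.hE3 j m (Ne.symm hj) y hy, smul_zero]
      rw [hsum]
      abel
    · have hy0 : y = 0 := C.mem_bot_high hm hy
      simp [hy0]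
  have := congrArg (fun f : Module.End K V => f x) h
  simpa using this

/-- Step 1 of the sufficiency direction: `⨆ i, E i W` is `R,L,K`-invariant. -/
lemma Wt_top (Kop : Module.End K V) (hK : ∀ i, ∀ x ∈ C.U i, Kop x = C.th i • x)
    (hBirr : ∀ W' : Submodule K V, Submodule.map C.Rm W' ≤ W' → Submodule.map C.Lm W' ≤ W' →
      Submodule.map Kop W' ≤ W' → W' = ⊥ ∨ W' = ⊤)
    (W : Submodule K V) (hW1 : Submodule.map C.Am W ≤ W) (hW2 : Submodule.map C.Asm W ≤ W)
    (hWne : W ≠ ⊥) :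
    (⨆ i, Submodule.map (C.E i) W) = ⊤ := by
  set Wt := ⨆ i, Submodule.map (C.E i) W with hWt
  have hgen : ∀ i, ∀ w ∈ W, C.E i w ∈ Wt := fun i w hw =>
    le_iSup (fun i => Submodule.map (C.E i) W) i (Submodule.mem_map_of_mem hw)
  have hmem : ∀ y ∈ Wt, (C.Rm y ∈ Wt ∧ C.Lm y ∈ Wt ∧ Kop y ∈ Wt) := by
    intro y hy
    refine Submodule.iSup_induction (motive := fun y => C.Rm y ∈ Wt ∧ C.Lm y ∈ Wt ∧ Kop y ∈ Wt)
      (fun i => Submodule.map (C.E i) W) hy ?_ ?_ ?_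
    rotate_left
    · simp
    · intro a b ha hb
      exact ⟨by rw [map_add]; exact Submodule.add_mem _ ha.1 hb.1,
        by rw [map_add]; exact Submodule.add_mem _ ha.2.1 hb.2.1,
        by rw [map_add]; exact Submodule.add_mem _ ha.2.2 hb.2.2⟩
    intro i z hz
    obtain ⟨w, hw, rfl⟩ := hz
    refine ⟨?_, ?_, ?_⟩
    · -- R (E i w) = E (i+1) (A w) - th (i+1) • E (i+1) w
      have h1 : C.Rm (C.E i w) = C.E (i+1) (C.Am w) - C.th (i+1) • C.E (i+1) w := by
        have hc := congrArg (fun f : Module.End K V => f w) (C.EAmS i)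
        simp only [Module.End.mul_apply, LinearMap.add_apply, LinearMap.smul_apply] at hc
        rw [hc]; abel
      rw [h1]
      exact Submodule.sub_mem _ (hgen (i+1) _ (hW1 (Submodule.mem_map_of_mem hw)))
        (Submodule.smul_mem _ _ (hgen (i+1) w hw))
    · -- L (E i w)
      cases i with
      | zero =>
          rw [C.hL0 _ (C.hE1 0 w)]
          exact Submodule.zero_mem _
      | succ n =>
          have h1 : C.Lm (C.E (n+1) w) = C.E n (C.Lm w) := by
            have hc := congrArg (fun f : Module.End K V => f w) (C.EL n)
            simp only [Module.End.mul_apply] at hc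
            rw [hc]
          rw [h1, C.Lm_eq w, map_sub, map_sum]
          refine Submodule.sub_mem _ (hgen n _ (hW2 (Submodule.mem_map_of_mem hw))) ?_
          refine Submodule.sum_mem _ fun j _ => ?_
          rw [map_smul]
          by_cases hnj : n = j
          · subst hnj
            rw [C.hE2 n _ (C.hE1 n w)]
            exact Submodule.smul_mem _ _ (hgen n w hw)
          · rw [C.hE3 n j (Ne.symm hnj) _ (C.hE1 j w), smul_zero]
            exact Submodule.zero_mem _
    · rw [hK i _ (C.hE1 i w)]
      exact Submodule.smul_mem _ _ (hgen i w hw)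
  have hWtne : Wt ≠ ⊥ := by
    intro hbot
    apply hWne
    rw [← le_bot_iff]
    intro w hw
    have : w = ∑ i ∈ Finset.range (C.d + 1), C.E i w := (C.sumE_apply w).symm
    rw [this]
    refine Submodule.sum_mem _ fun i _ => ?_
    have := hgen i w hw
    rw [hbot] at this
    simpa using this
  rcases hBirr Wt (fun y ⟨x, hx, hxy⟩ => hxy ▸ (hmem x hx).1)
      (fun y ⟨x, hx, hxy⟩ => hxy ▸ (hmem x hx).2.1)
      (fun y ⟨x, hx, hxy⟩ => hxy ▸ (hmem x hx).2.2) with h | h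
  · exact absurd h hWtne
  · exact h

lemma QA_mem_W (W : Submodule K V) (hW1 : Submodule.map C.Am W ≤ W) (k : ℕ)
    {w : V} (hw : w ∈ W) : C.QA k w ∈ W := by
  induction k with
  | zero => exact hw
  | succ n ih =>
      show ((C.Am - C.th (n+1) • (1 : Module.End K V)) * C.QA n) w ∈ W
      rw [Module.End.mul_apply, LinearMap.sub_apply, LinearMap.smul_apply, Module.End.one_apply]
      exact Submodule.sub_mem _ (hW1 (Submodule.mem_map_of_mem ih)) (Submodule.smul_mem _ _ ih)

lemma QAs_mem_W (W : Submodule K V) (hW2 : Submodule.map C.Asm W ≤ W) (k : ℕ)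
    {w : V} (hw : w ∈ W) : C.QAs k w ∈ W := by
  induction k with
  | zero => exact hw
  | succ n ih =>
      show ((C.Asm - C.ths (n+1) • (1 : Module.End K V)) * C.QAs n) w ∈ W
      rw [Module.End.mul_apply, LinearMap.sub_apply, LinearMap.smul_apply, Module.End.one_apply]
      exact Submodule.sub_mem _ (hW2 (Submodule.mem_map_of_mem ih)) (Submodule.smul_mem _ _ ih)

lemma E0_QA (k : ℕ) (x : V) :
    C.E 0 (C.QA k x) = (∏ j ∈ Finset.range k, (C.th 0 - C.th (j+1))) • C.E 0 x := by
  induction k with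
  | zero => simp [QA]
  | succ n ih =>
      show C.E 0 (((C.Am - C.th (n+1) • (1 : Module.End K V)) * C.QA n) x) = _
      rw [Module.End.mul_apply, LinearMap.sub_apply, LinearMap.smul_apply, Module.End.one_apply,
        map_sub, map_smul]
      have hc := congrArg (fun f : Module.End K V => f (C.QA n x)) C.EAm0
      simp only [Module.End.mul_apply, LinearMap.smul_apply] at hc
      rw [hc, ih, Finset.prod_range_succ, smul_smul, smul_smul, ← sub_smul]
      congr 1
      ring

lemma ff_QAs (k : ℕ) (x : V) :
    C.ff (C.QAs k x) = (∏ j ∈ Finset.range k, (C.ths 0 - C.ths (j+1))) * C.ff x := by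
  induction k with
  | zero => simp [QAs]
  | succ n ih =>
      show C.ff (((C.Asm - C.ths (n+1) • (1 : Module.End K V)) * C.QAs n) x) = _
      rw [Module.End.mul_apply, LinearMap.sub_apply, LinearMap.smul_apply, Module.End.one_apply,
        map_sub, map_smul, C.ff_As_apply, ih, Finset.prod_range_succ, smul_eq_mul]
      ring

/-- main sufficiency direction -/
lemma dirB (Kop : Module.End K V) (hK : ∀ i, ∀ x ∈ C.U i, Kop x = C.th i • x)
    (hBirr : ∀ W' : Submodule K V, Submodule.map C.Rm W' ≤ W' → Submodule.map C.Lm W' ≤ W' →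
      Submodule.map Kop W' ≤ W' → W' = ⊥ ∨ W' = ⊤)
    (heps : C.ff C.vv ≠ 0)
    (W : Submodule K V) (hW1 : Submodule.map C.Am W ≤ W) (hW2 : Submodule.map C.Asm W ≤ W)
    (hWne : W ≠ ⊥) : W = ⊤ := by
  -- step 1: some w ∈ W with E 0 w ≠ 0
  have hWt := C.Wt_top Kop hK hBirr W hW1 hW2 hWne
  have hex : ∃ w ∈ W, C.E 0 w ≠ 0 := by
    by_contra hno
    push_neg at hno
    have hzero : ∀ y ∈ (⨆ i, Submodule.map (C.E i) W), C.E 0 y = 0 := by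
      intro y hy
      refine Submodule.iSup_induction (motive := fun y => C.E 0 y = 0)
        (fun i => Submodule.map (C.E i) W) hy ?_ (by simp) ?_
      · intro i z hz
        obtain ⟨w, hw, rfl⟩ := hz
        by_cases hi : i = 0
        · subst hi
          rw [C.hE2 0 _ (C.hE1 0 w)]
          exact hno w hw
        · exact C.hE3 0 i hi _ (C.hE1 i w)
      · intro a b ha hb
        rw [map_add, ha, hb, add_zero]
    have hu0 : C.E 0 C.u = 0 := hzero C.u (by rw [hWt]; exact Submodule.mem_top)
    rw [C.hE2 0 C.u C.hu] at hu0
    exact C.hune hu0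
  obtain ⟨w, hwW, hwE⟩ := hex
  -- step 2: y := QA d w is in W ∩ ker (A - θ₀), with nonzero E 0
  set y := C.QA C.d w with hy
  have hyW : y ∈ W := C.QA_mem_W W hW1 C.d hwW
  have hyker : C.Am y = C.th 0 • y := by
    have h0 := congrArg (fun f : Module.End K V => f w) C.PA_d1_zero
    simp only [Module.End.mul_apply, LinearMap.zero_apply, LinearMap.sub_apply,
      LinearMap.smul_apply, Module.End.one_apply] at h0
    have := sub_eq_zero.mp h0
    exact this
  have hyE : C.E 0 y ≠ 0 := by
    rw [hy, C.E0_QA C.d w]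
    refine smul_ne_zero ?_ hwE
    exact Finset.prod_ne_zero_iff.mpr fun j _ => sub_ne_zero.mpr (C.th_ne (by omega))
  have hyv : y = C.uc y • C.vv := C.kerA0 hyker
  have hucy : C.uc y ≠ 0 := by
    intro h0
    rw [hyv, h0, zero_smul] at hyE
    rw [map_zero] at hyE
    exact hyE rfl
  have hvvW : C.vv ∈ W := by
    have h2 : C.uc y • C.vv ∈ W := hyv ▸ hyW
    have h3 : C.vv = (C.uc y)⁻¹ • (C.uc y • C.vv) := by
      rw [smul_smul, inv_mul_cancel₀ hucy, one_smul]
    rw [h3]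
    exact Submodule.smul_mem _ _ h2
  -- step 3: z := QAs d vv is a nonzero element of W ∩ U 0
  set z := C.QAs C.d C.vv with hz
  have hzW : z ∈ W := C.QAs_mem_W W hW2 C.d hvvW
  have hzker : C.Asm z = C.ths 0 • z := by
    have h0 := congrArg (fun f : Module.End K V => f C.vv) C.DAs_d_zero
    simp only [Module.End.mul_apply, LinearMap.zero_apply, LinearMap.sub_apply,
      LinearMap.smul_apply, Module.End.one_apply] at h0
    exact sub_eq_zero.mp h0
  have hzU0 : z ∈ C.U 0 := C.kerAs0 hzker
  have hzf : C.ff z ≠ 0 := by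
    rw [hz, C.ff_QAs C.d C.vv]
    exact mul_ne_zero
      (Finset.prod_ne_zero_iff.mpr fun j _ => sub_ne_zero.mpr (C.ths_ne (by omega))) heps
  have hzu : z = C.uc z • C.u := C.hucU0 z hzU0
  have hucz : C.uc z ≠ 0 := by
    intro h0
    rw [hzu, h0, zero_smul] at hzf
    rw [map_zero] at hzf
    exact hzf rfl
  have huW : C.u ∈ W := by
    have h2 : C.uc z • C.u ∈ W := hzu ▸ hzW
    have h3 : C.u = (C.uc z)⁻¹ • (C.uc z • C.u) := by
      rw [smul_smul, inv_mul_cancel₀ hucz, one_smul]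
    rw [h3]
    exact Submodule.smul_mem _ _ h2
  -- step 4: the span of all homogeneous elements of W is R,L,K-invariant
  set gens : Set V := {x | x ∈ W ∧ ∃ i, x ∈ C.U i} with hgens
  set W0 : Submodule K V := Submodule.span K gens with hW0
  have hRW0 : Submodule.map C.Rm W0 ≤ W0 := by
    rw [hW0, Submodule.map_span, Submodule.span_le]
    rintro y ⟨x, ⟨hxW, i, hxU⟩, rfl⟩
    refine Submodule.subset_span ⟨?_, i+1, C.Rmem hxU⟩
    have : C.Rm x = C.Am x - C.th i • x := by
      rw [C.hA' i x hxU]; abel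
    rw [this]
    exact Submodule.sub_mem _ (hW1 (Submodule.mem_map_of_mem hxW)) (Submodule.smul_mem _ _ hxW)
  have hLW0 : Submodule.map C.Lm W0 ≤ W0 := by
    rw [hW0, Submodule.map_span, Submodule.span_le]
    rintro y ⟨x, ⟨hxW, i, hxU⟩, rfl⟩
    refine Submodule.subset_span ⟨?_, i-1, C.Lmem hxU⟩
    have : C.Lm x = C.Asm x - C.ths i • x := by
      rw [C.hAs' i x hxU]; abel
    rw [this]
    exact Submodule.sub_mem _ (hW2 (Submodule.mem_map_of_mem hxW)) (Submodule.smul_mem _ _ hxW)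
  have hKW0 : Submodule.map Kop W0 ≤ W0 := by
    rw [hW0, Submodule.map_span, Submodule.span_le]
    rintro y ⟨x, ⟨hxW, i, hxU⟩, rfl⟩
    rw [hK i x hxU]
    exact Submodule.smul_mem _ _ (Submodule.subset_span ⟨hxW, i, hxU⟩)
  have hW0le : W0 ≤ W := by
    rw [hW0, Submodule.span_le]
    rintro x ⟨hxW, _⟩
    exact hxW
  have hW0ne : W0 ≠ ⊥ := by
    intro h0
    have : C.u ∈ W0 := Submodule.subset_span ⟨huW, 0, C.hu⟩
    rw [h0] at this
    exact C.hune (by simpa using this)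
  rcases hBirr W0 hRW0 hLW0 hKW0 with h | h
  · exact absurd h hW0ne
  · exact le_antisymm le_top (h ▸ hW0le)

end DirB

end Ctx

/-- downward cascade for constructing `A*`-eigenvectors -/
def Ctx.casL (C : Ctx K V) (j : ℕ) (x : V) : ℕ → V
  | 0 => x
  | (m+1) => -(C.ths (j - (m+1)) - C.ths j)⁻¹ • C.Lm (Ctx.casL C j x m)

/-- upward cascade for constructing `A`-eigenvectors -/
def Ctx.casR (C : Ctx K V) (j : ℕ) (x : V) : ℕ → V
  | 0 => x
  | (m+1) => -(C.th (j + (m+1)) - C.th j)⁻¹ • C.Rm (Ctx.casR C j x m)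

namespace Ctx
variable (C : Ctx K V)

/-- the eigenspace of `A` for `θ_j` -/
def eigA (j : ℕ) : Submodule K V := Module.End.eigenspace C.Am (C.th j)
/-- the eigenspace of `A*` for `θ*_j` -/
def eigAs (j : ℕ) : Submodule K V := Module.End.eigenspace C.Asm (C.ths j)

lemma mem_eigA {j : ℕ} {x : V} : x ∈ C.eigA j ↔ C.Am x = C.th j • x :=
  Module.End.mem_eigenspace_iff
lemma mem_eigAs {j : ℕ} {x : V} : x ∈ C.eigAs j ↔ C.Asm x = C.ths j • x :=
  Module.End.mem_eigenspace_iff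

lemma U0_le_eigAs : C.U 0 ≤ C.eigAs 0 := by
  intro x hx
  rw [C.mem_eigAs, C.hAs' 0 x hx, C.hL0 x hx, zero_add]

lemma casL_mem {j : ℕ} {x : V} (hx : x ∈ C.U j) (m : ℕ) : C.casL j x m ∈ C.U (j - m) := by
  induction m with
  | zero => exact hx
  | succ n ih =>
      show -(C.ths (j - (n+1)) - C.ths j)⁻¹ • C.Lm (C.casL j x n) ∈ _
      refine Submodule.smul_mem _ _ ?_
      have := C.Lmem ih
      rwa [Nat.sub_sub] at this

lemma casL_zero {j : ℕ} {x : V} (hx : x ∈ C.U j) : ∀ m, j < m → C.casL j x m = 0 := by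
  intro m
  induction m with
  | zero => omega
  | succ n ih =>
      intro hn
      show -(C.ths (j - (n+1)) - C.ths j)⁻¹ • C.Lm (C.casL j x n) = 0
      rcases Nat.lt_or_ge j n with h | h
      · rw [ih h, map_zero, smul_zero]
      · have hj : j = n := by omega
        subst hj
        have hU0 : C.casL j x j ∈ C.U 0 := by
          have := C.casL_mem hx j
          rwa [Nat.sub_self] at this
        rw [C.hL0 _ hU0, smul_zero]

lemma casL_step {j : ℕ} {x : V} (hx : x ∈ C.U j) (m : ℕ) :
    C.Lm (C.casL j x m) = -((C.ths (j - (m+1)) - C.ths j) • C.casL j x (m+1)) := by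
  by_cases hc : C.ths (j - (m+1)) - C.ths j = 0
  · have hj0 : j = 0 := by
      have := C.ths_inj (sub_eq_zero.mp hc)
      omega
    subst hj0
    have hU0 : C.casL 0 x m ∈ C.U 0 := by
      have := C.casL_mem hx m
      simpa using this
    rw [C.hL0 _ hU0, hc, zero_smul, neg_zero]
  · show C.Lm (C.casL j x m)
      = -((C.ths (j - (m+1)) - C.ths j) • (-(C.ths (j - (m+1)) - C.ths j)⁻¹ • C.Lm (C.casL j x m)))
    rw [smul_smul, mul_neg, mul_inv_cancel₀ hc, neg_smul, one_smul, neg_neg]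

lemma casR_mem {j : ℕ} {x : V} (hx : x ∈ C.U j) (m : ℕ) : C.casR j x m ∈ C.U (j + m) := by
  induction m with
  | zero => exact hx
  | succ n ih =>
      show -(C.th (j + (n+1)) - C.th j)⁻¹ • C.Rm (C.casR j x n) ∈ _
      refine Submodule.smul_mem _ _ ?_
      have := C.Rmem ih
      rwa [Nat.add_assoc] at this

lemma casR_step {j : ℕ} {x : V} (hx : x ∈ C.U j) (m : ℕ) :
    C.Rm (C.casR j x m) = -((C.th (j + (m+1)) - C.th j) • C.casR j x (m+1)) := by
  have hc : C.th (j + (m+1)) - C.th j ≠ 0 := sub_ne_zero.mpr (C.th_ne (by omega))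
  show C.Rm (C.casR j x m)
    = -((C.th (j + (m+1)) - C.th j) • (-(C.th (j + (m+1)) - C.th j)⁻¹ • C.Rm (C.casR j x m)))
  rw [smul_smul, mul_neg, mul_inv_cancel₀ hc, neg_smul, one_smul, neg_neg]

/-- the `A*`-eigenvector built from `x ∈ U j` -/
def wAs (j : ℕ) (x : V) : V := ∑ m ∈ Finset.range (C.d + 1), C.casL j x m
/-- the `A`-eigenvector built from `x ∈ U j` -/
def wA (j : ℕ) (x : V) : V := ∑ m ∈ Finset.range (C.d + 1), C.casR j x m

lemma wAs_eig {j : ℕ} (hj : j ≤ C.d) {x : V} (hx : x ∈ C.U j) : C.wAs j x ∈ C.eigAs j := by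
  rw [C.mem_eigAs, ← sub_eq_zero]
  unfold wAs
  rw [map_sum, Finset.smul_sum, ← Finset.sum_sub_distrib]
  have hterm : ∀ m, C.Asm (C.casL j x m) - C.ths j • C.casL j x m
      = (fun m => (C.ths (j - m) - C.ths j) • C.casL j x m) m
        - (fun m => (C.ths (j - m) - C.ths j) • C.casL j x m) (m+1) := by
    intro m
    have h1 : C.Asm (C.casL j x m) = C.Lm (C.casL j x m) + C.ths (j - m) • C.casL j x m :=
      C.hAs' (j - m) _ (C.casL_mem hx m)
    rw [h1, C.casL_step hx m]
    simp only [sub_smul]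
    abel
  rw [Finset.sum_congr rfl fun m _ => hterm m, Finset.sum_range_sub']
  have htop : (C.ths (j - (C.d+1)) - C.ths j) • C.casL j x (C.d+1) = 0 := by
    rw [C.casL_zero hx (C.d+1) (by omega), smul_zero]
  show (C.ths (j - 0) - C.ths j) • C.casL j x 0 - _ = 0
  rw [htop, Nat.sub_zero, sub_self, zero_smul, sub_zero]

lemma wA_eig {j : ℕ} {x : V} (hx : x ∈ C.U j) : C.wA j x ∈ C.eigA j := by
  rw [C.mem_eigA, ← sub_eq_zero]
  unfold wA
  rw [map_sum, Finset.smul_sum, ← Finset.sum_sub_distrib]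
  have hterm : ∀ m, C.Am (C.casR j x m) - C.th j • C.casR j x m
      = (fun m => (C.th (j + m) - C.th j) • C.casR j x m) m
        - (fun m => (C.th (j + m) - C.th j) • C.casR j x m) (m+1) := by
    intro m
    have h1 : C.Am (C.casR j x m) = C.Rm (C.casR j x m) + C.th (j + m) • C.casR j x m :=
      C.hA' (j + m) _ (C.casR_mem hx m)
    rw [h1, C.casR_step hx m]
    simp only [sub_smul]
    abel
  rw [Finset.sum_congr rfl fun m _ => hterm m, Finset.sum_range_sub']
  have htop : (C.th (j + (C.d+1)) - C.th j) • C.casR j x (C.d+1) = 0 := by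
    rw [C.mem_bot_high (by omega) (C.casR_mem hx (C.d+1)), smul_zero]
  show (C.th (j + 0) - C.th j) • C.casR j x 0 - _ = 0
  rw [htop, Nat.add_zero, sub_self, zero_smul, sub_zero]

lemma Ej_wAs {j : ℕ} {x : V} (hx : x ∈ C.U j) : C.E j (C.wAs j x) = x := by
  unfold wAs
  rw [map_sum, Finset.sum_eq_single_of_mem 0 (Finset.mem_range.mpr (by omega))]
  · exact C.hE2 j x hx
  · intro m _ hm
    rcases Nat.lt_or_ge j m with h | h
    · rw [C.casL_zero hx m h, map_zero]
    · exact C.hE3 j (j - m) (by omega) _ (C.casL_mem hx m)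

lemma wAs_sub_mem {j : ℕ} {x : V} (hx : x ∈ C.U j) :
    C.wAs j x - x ∈ C.Fsub (j - 1) := by
  have hs : C.wAs j x = (∑ m ∈ Finset.range C.d, C.casL j x (m+1)) + C.casL j x 0 :=
    Finset.sum_range_succ' _ _
  have hx0 : C.casL j x 0 = x := rfl
  rw [hs, hx0, add_sub_cancel_right]
  refine Submodule.sum_mem _ fun m _ => ?_
  exact C.U_le_Fsub (by omega) (C.casL_mem hx (m+1))

lemma wA_sub_mem {j : ℕ} {x : V} (hx : x ∈ C.U j) :
    C.wA j x - x ∈ C.Gsub (j + 1) := by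
  have hs : C.wA j x = (∑ m ∈ Finset.range C.d, C.casR j x (m+1)) + C.casR j x 0 :=
    Finset.sum_range_succ' _ _
  have hx0 : C.casR j x 0 = x := rfl
  rw [hs, hx0, add_sub_cancel_right]
  refine Submodule.sum_mem _ fun m _ => ?_
  exact C.U_le_Gsub (by omega) (C.casR_mem hx (m+1))

/-- the span of the `A*`-eigenspaces is everything -/
lemma eigAs_top : (⨆ j, ⨆ (_ : j ≤ C.d), C.eigAs j) = ⊤ := by
  set T := (⨆ j, ⨆ (_ : j ≤ C.d), C.eigAs j) with hT
  have hle : ∀ k, C.U k ≤ T := by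
    intro k
    induction k using Nat.strong_induction_on with
    | _ k ih =>
        rcases Nat.lt_or_ge C.d k with hk | hk
        · rw [C.hUbot k hk]; exact bot_le
        · cases k with
          | zero =>
              exact le_trans C.U0_le_eigAs (le_iSup_of_le 0 (le_iSup_of_le (by omega) le_rfl))
          | succ n =>
              intro x hx
              have hincl : C.eigAs (n+1) ≤ T := le_iSup_of_le (n+1) (le_iSup_of_le hk le_rfl)
              have hwAs : C.wAs (n+1) x ∈ T := hincl (C.wAs_eig hk hx)
              have hFle : C.Fsub n ≤ T := iSup₂_le fun j hj => ih j (by omega)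
              have hrest : C.wAs (n+1) x - x ∈ T := by
                have := C.wAs_sub_mem hx
                simpa using hFle this
              have := Submodule.sub_mem _ hwAs hrest
              simpa using this
  rw [← top_le_iff, ← C.htop]
  exact iSup_le hle

/-- the span of the `A`-eigenspaces is everything -/
lemma eigA_top : (⨆ j, ⨆ (_ : j ≤ C.d), C.eigA j) = ⊤ := by
  set T := (⨆ j, ⨆ (_ : j ≤ C.d), C.eigA j) with hT
  have hle : ∀ m, ∀ k, C.d + 1 - k ≤ m → C.U k ≤ T := by
    intro m
    induction m with
    | zero => intro k hk; rw [C.hUbot k (by omega)]; exact bot_le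
    | succ n ih =>
        intro k hk
        rcases Nat.lt_or_ge C.d k with hdk | hdk
        · rw [C.hUbot k hdk]; exact bot_le
        · intro x hx
          have hincl : C.eigA k ≤ T := le_iSup_of_le k (le_iSup_of_le hdk le_rfl)
          have hwA : C.wA k x ∈ T := hincl (C.wA_eig hx)
          have hGle : C.Gsub (k+1) ≤ T := iSup₂_le fun j hj => ih j (by omega)
          have hrest : C.wA k x - x ∈ T := hGle (C.wA_sub_mem hx)
          have := Submodule.sub_mem _ hwA hrest
          simpa using this
  rw [← top_le_iff, ← C.htop]
  exact iSup_le fun k => hle (C.d + 1) k (by omega)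

/-- decomposition of an element along the family of eigenspaces -/
lemma exists_rep (S : ℕ → Submodule K V) {x : V} (hx : x ∈ (⨆ j, ⨆ (_ : j ≤ C.d), S j)) :
    ∃ z : ℕ → V, (∀ m, z m ∈ S m) ∧ x = ∑ m ∈ Finset.range (C.d + 1), z m := by
  refine Submodule.iSup_induction
    (motive := fun x => ∃ z : ℕ → V, (∀ m, z m ∈ S m) ∧ x = ∑ m ∈ Finset.range (C.d + 1), z m)
    (fun j => ⨆ (_ : j ≤ C.d), S j) hx ?_ ?_ ?_
  · intro j x hxj
    have hxj' : x ∈ (⨆ (_ : j ≤ C.d), S j) := hxj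
    have hxx : j ≤ C.d → x ∈ S j := by
      intro hj
      have h : (⨆ (_ : j ≤ C.d), S j) ≤ S j := iSup_le fun _ => le_rfl
      exact h hxj'
    by_cases hj : j ≤ C.d
    · refine ⟨fun m => if m = j then x else 0, ?_, ?_⟩
      · intro m
        show (if m = j then x else 0) ∈ S m
        by_cases hm : m = j
        · rw [if_pos hm, hm]; exact hxx hj
        · rw [if_neg hm]; exact Submodule.zero_mem _
      · refine Eq.symm ?_
        rw [Finset.sum_ite_eq' (Finset.range (C.d + 1)) j (fun _ => x),
          if_pos (Finset.mem_range.mpr (by omega))]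
    · have hb : (⨆ (_ : j ≤ C.d), S j) = ⊥ := by
        rw [← le_bot_iff]
        exact iSup_le fun h => absurd h hj
      rw [hb] at hxj'
      refine ⟨0, fun m => Submodule.zero_mem _, ?_⟩
      simp only [Submodule.mem_bot] at hxj'
      simp [hxj']
  · exact ⟨0, fun m => Submodule.zero_mem _, by simp⟩
  · rintro a b ⟨za, hza, rfl⟩ ⟨zb, hzb, rfl⟩
    exact ⟨za + zb, fun m => Submodule.add_mem _ (hza m) (hzb m),
      by rw [← Finset.sum_add_distrib]; rfl⟩

/-- independence of eigenspace components (for `A*`) -/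
lemma indepAs {z : ℕ → V} (hz : ∀ m, z m ∈ C.eigAs m)
    (hsum : ∑ m ∈ Finset.range (C.d + 1), z m = 0) :
    ∀ m, m ∈ Finset.range (C.d + 1) → z m = 0 := by
  intro m hm
  have hind := Module.End.eigenspaces_iSupIndep C.Asm
  have hd := hind (C.ths m)
  have h1 : z m ∈ Module.End.eigenspace C.Asm (C.ths m) := hz m
  have h2 : z m ∈ (⨆ ν, ⨆ (_ : ν ≠ C.ths m), Module.End.eigenspace C.Asm ν) := by
    have : z m = -∑ l ∈ (Finset.range (C.d + 1)).erase m, z l := by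
      rw [← Finset.add_sum_erase _ _ hm] at hsum
      linear_combination (norm := module) hsum
    rw [this]
    refine Submodule.neg_mem _ (Submodule.sum_mem _ fun l hl => ?_)
    have hlm : l ≠ m := (Finset.mem_erase.mp hl).1
    have hincl : C.eigAs l ≤ (⨆ ν, ⨆ (_ : ν ≠ C.ths m), Module.End.eigenspace C.Asm ν) :=
      le_iSup_of_le (C.ths l) (le_iSup_of_le (C.ths_ne hlm) le_rfl)
    exact hincl (hz l)
  exact Submodule.disjoint_def.mp hd (z m) h1 h2

/-- independence of eigenspace components (for `A`) -/
lemma indepA {z : ℕ → V} (hz : ∀ m, z m ∈ C.eigA m)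
    (hsum : ∑ m ∈ Finset.range (C.d + 1), z m = 0) :
    ∀ m, m ∈ Finset.range (C.d + 1) → z m = 0 := by
  intro m hm
  have hind := Module.End.eigenspaces_iSupIndep C.Am
  have hd := hind (C.th m)
  have h1 : z m ∈ Module.End.eigenspace C.Am (C.th m) := hz m
  have h2 : z m ∈ (⨆ ν, ⨆ (_ : ν ≠ C.th m), Module.End.eigenspace C.Am ν) := by
    have : z m = -∑ l ∈ (Finset.range (C.d + 1)).erase m, z l := by
      rw [← Finset.add_sum_erase _ _ hm] at hsum
      linear_combination (norm := module) hsum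
    rw [this]
    refine Submodule.neg_mem _ (Submodule.sum_mem _ fun l hl => ?_)
    have hlm : l ≠ m := (Finset.mem_erase.mp hl).1
    have hincl : C.eigA l ≤ (⨆ ν, ⨆ (_ : ν ≠ C.th m), Module.End.eigenspace C.Am ν) :=
      le_iSup_of_le (C.th l) (le_iSup_of_le (C.th_ne hlm) le_rfl)
    exact hincl (hz l)
  exact Submodule.disjoint_def.mp hd (z m) h1 h2

section Serre

lemma qInt3 : qInt C.q 3 = C.q^2 + 1 + C.q⁻¹^2 := by
  have hqq : C.q * C.q⁻¹ = 1 := mul_inv_cancel₀ C.hq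
  rw [qInt, div_eq_iff C.qq_ne]
  linear_combination (C.q - C.q⁻¹) * hqq

/-- `U_0 + ... + U_k` in terms of `A`-eigenspaces -/
def PhiA (k : ℕ) : Submodule K V := ⨆ j, ⨆ (_ : j ≤ k), C.eigA j
/-- `V*_k + ... + V*_d` -/
def PsiS (k : ℕ) : Submodule K V := ⨆ j, ⨆ (_ : k ≤ j ∧ j ≤ C.d), C.eigAs j

lemma eigA_le_PhiA {j k : ℕ} (hj : j ≤ k) : C.eigA j ≤ C.PhiA k :=
  le_iSup_of_le j (le_iSup_of_le hj le_rfl)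
lemma eigAs_le_PsiS {j k : ℕ} (hj : k ≤ j) (hjd : j ≤ C.d) : C.eigAs j ≤ C.PsiS k :=
  le_iSup_of_le j (le_iSup_of_le ⟨hj, hjd⟩ le_rfl)

lemma PhiA_mono {k l : ℕ} (h : k ≤ l) : C.PhiA k ≤ C.PhiA l :=
  iSup₂_le fun j hj => C.eigA_le_PhiA (le_trans hj h)
lemma PsiS_anti {k l : ℕ} (h : k ≤ l) : C.PsiS l ≤ C.PsiS k :=
  iSup₂_le fun j hj => C.eigAs_le_PsiS (le_trans h hj.1) hj.2

lemma PhiA_d : C.PhiA C.d = ⊤ := C.eigA_top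

lemma PsiS_zero : C.PsiS 0 = ⊤ := by
  rw [← top_le_iff, ← C.eigAs_top]
  exact iSup₂_le fun j hj => C.eigAs_le_PsiS (by omega) hj

lemma eig_shiftAs {j : ℕ} {x : V} (hx : x ∈ C.eigAs j) (a : K) :
    (C.Asm - a • (1 : Module.End K V)) x = (C.ths j - a) • x := by
  rw [LinearMap.sub_apply, LinearMap.smul_apply, Module.End.one_apply, C.mem_eigAs.mp hx, sub_smul]

lemma eig_shiftA {j : ℕ} {x : V} (hx : x ∈ C.eigA j) (a : K) :
    (C.Am - a • (1 : Module.End K V)) x = (C.th j - a) • x := by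
  rw [LinearMap.sub_apply, LinearMap.smul_apply, Module.End.one_apply, C.mem_eigA.mp hx, sub_smul]

lemma tridAs_weak
    (hS : C.Asm ^ 3 * C.Am - qInt C.q 3 • (C.Asm ^ 2 * C.Am * C.Asm)
      + qInt C.q 3 • (C.Asm * C.Am * C.Asm ^ 2) - C.Am * C.Asm ^ 3 = 0)
    {j : ℕ} (hj : j ≤ C.d) {x : V} (hx : x ∈ C.eigAs j) :
    C.Am x ∈ C.PsiS (j - 1) := by
  have hqq : C.q * C.q⁻¹ = 1 := mul_inv_cancel₀ C.hq
  have hx' : C.Asm x = C.ths j • x := C.mem_eigAs.mp hx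
  -- step 1 : (A* - a)(A* - μ)(A* - c) (A x) = 0 with a = q²μ, c = q⁻²μ
  have hP : (C.Asm - (C.q ^ 2 * C.ths j) • (1 : Module.End K V))
      ((C.Asm - C.ths j • (1 : Module.End K V))
        ((C.Asm - (C.q⁻¹ ^ 2 * C.ths j) • (1 : Module.End K V)) (C.Am x))) = 0 := by
    have h0 := congrArg (fun f : Module.End K V => f x) hS
    simp only [LinearMap.sub_apply, LinearMap.add_apply, LinearMap.smul_apply,
      Module.End.mul_apply, pow_succ, pow_zero, one_mul, Module.End.one_apply,
      LinearMap.zero_apply] at h0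
    rw [C.qInt3] at h0
    simp only [hx', map_smul] at h0
    have he2 : (C.q ^ 2 * C.ths j) * C.ths j + (C.q ^ 2 * C.ths j) * (C.q⁻¹ ^ 2 * C.ths j)
        + C.ths j * (C.q⁻¹ ^ 2 * C.ths j)
        = (C.q^2 + 1 + C.q⁻¹^2) * (C.ths j * C.ths j) := by
      linear_combination ((C.q * C.q⁻¹ + 1) * C.ths j * C.ths j) * hqq
    have he3 : (C.q ^ 2 * C.ths j) * C.ths j * (C.q⁻¹ ^ 2 * C.ths j)
        = C.ths j * (C.ths j * C.ths j) := by
      linear_combination ((C.q * C.q⁻¹ + 1) * C.ths j * C.ths j * C.ths j) * hqq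
    have hQ : C.Asm (C.Asm (C.Asm (C.Am x)))
        - ((C.q ^ 2 * C.ths j) + C.ths j + (C.q⁻¹ ^ 2 * C.ths j)) • C.Asm (C.Asm (C.Am x))
        + ((C.q ^ 2 * C.ths j) * C.ths j + (C.q ^ 2 * C.ths j) * (C.q⁻¹ ^ 2 * C.ths j)
            + C.ths j * (C.q⁻¹ ^ 2 * C.ths j)) • C.Asm (C.Am x)
        - ((C.q ^ 2 * C.ths j) * C.ths j * (C.q⁻¹ ^ 2 * C.ths j)) • C.Am x = 0 := by
      rw [he2, he3]
      linear_combination (norm := module) h0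
    simp only [LinearMap.sub_apply, LinearMap.smul_apply, Module.End.one_apply, map_sub, map_smul]
    linear_combination (norm := module) hQ
  -- step 2 : decompose A x along the A*-eigenspaces
  have hyT : C.Am x ∈ (⨆ j, ⨆ (_ : j ≤ C.d), C.eigAs j) := by
    rw [C.eigAs_top]; exact Submodule.mem_top
  obtain ⟨z, hz, hrep⟩ := C.exists_rep C.eigAs hyT
  -- step 3 : each scaled component vanishes
  have hPz : ∀ m, (C.Asm - (C.q ^ 2 * C.ths j) • (1 : Module.End K V))
      ((C.Asm - C.ths j • (1 : Module.End K V))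
        ((C.Asm - (C.q⁻¹ ^ 2 * C.ths j) • (1 : Module.End K V)) (z m)))
      = ((C.ths m - C.q ^ 2 * C.ths j) * ((C.ths m - C.ths j)
          * (C.ths m - C.q⁻¹ ^ 2 * C.ths j))) • z m := by
    intro m
    rw [C.eig_shiftAs (hz m) (C.q⁻¹ ^ 2 * C.ths j), map_smul, C.eig_shiftAs (hz m) (C.ths j),
      map_smul, map_smul, C.eig_shiftAs (hz m) (C.q ^ 2 * C.ths j), smul_smul, smul_smul]
    congr 1
    ring
  have hzero : ∀ m ∈ Finset.range (C.d + 1),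
      ((C.ths m - C.q ^ 2 * C.ths j) * ((C.ths m - C.ths j)
        * (C.ths m - C.q⁻¹ ^ 2 * C.ths j))) • z m = 0 := by
    refine C.indepAs (fun m => Submodule.smul_mem _ _ (hz m)) ?_
    calc ∑ m ∈ Finset.range (C.d + 1), ((C.ths m - C.q ^ 2 * C.ths j) * ((C.ths m - C.ths j)
          * (C.ths m - C.q⁻¹ ^ 2 * C.ths j))) • z m
        = (C.Asm - (C.q ^ 2 * C.ths j) • (1 : Module.End K V))
            ((C.Asm - C.ths j • (1 : Module.End K V))
              ((C.Asm - (C.q⁻¹ ^ 2 * C.ths j) • (1 : Module.End K V))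
                (∑ m ∈ Finset.range (C.d + 1), z m))) := by
          rw [map_sum, map_sum, map_sum]
          exact (Finset.sum_congr rfl fun m _ => (hPz m).symm)
    _ = 0 := by rw [← hrep]; exact hP
  -- step 4 : conclude
  rw [hrep]
  refine Submodule.sum_mem _ fun m hm => ?_
  have hmd : m ≤ C.d := by have := Finset.mem_range.mp hm; omega
  rcases smul_eq_zero.mp (hzero m hm) with hcoef | hzm
  · have hjm : j - 1 ≤ m := by
      by_contra hcon
      push_neg at hcon
      have hq2 : C.q ^ 2 = C.q ^ (2 : ℤ) := by norm_cast
      have hqi2 : C.q⁻¹ ^ 2 = C.q ^ (-2 : ℤ) := by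
        rw [inv_pow, ← zpow_natCast, ← zpow_neg]
        norm_num
      rcases mul_eq_zero.mp hcoef with h1 | h12
      · have heq : C.ths m = C.q ^ 2 * C.ths j := sub_eq_zero.mp h1
        rw [ths, ths, hq2, ← zpow_add₀ C.hq] at heq
        have := C.zpow_inj heq
        omega
      rcases mul_eq_zero.mp h12 with h2 | h3
      · have heq : C.ths m = C.ths j := sub_eq_zero.mp h2
        have := C.ths_inj heq
        omega
      · have heq : C.ths m = C.q⁻¹ ^ 2 * C.ths j := sub_eq_zero.mp h3
        rw [ths, ths, hqi2, ← zpow_add₀ C.hq] at heq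
        have := C.zpow_inj heq
        omega
    exact C.eigAs_le_PsiS hjm hmd (hz m)
  · rw [hzm]; exact Submodule.zero_mem _

lemma tridA_weak
    (hS : C.Am ^ 3 * C.Asm - qInt C.q 3 • (C.Am ^ 2 * C.Asm * C.Am)
      + qInt C.q 3 • (C.Am * C.Asm * C.Am ^ 2) - C.Asm * C.Am ^ 3 = 0)
    {j : ℕ} (hj : j ≤ C.d) {x : V} (hx : x ∈ C.eigA j) :
    C.Asm x ∈ C.PhiA (j + 1) := by
  have hqq : C.q * C.q⁻¹ = 1 := mul_inv_cancel₀ C.hq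
  have hx' : C.Am x = C.th j • x := C.mem_eigA.mp hx
  have hP : (C.Am - (C.q ^ 2 * C.th j) • (1 : Module.End K V))
      ((C.Am - C.th j • (1 : Module.End K V))
        ((C.Am - (C.q⁻¹ ^ 2 * C.th j) • (1 : Module.End K V)) (C.Asm x))) = 0 := by
    have h0 := congrArg (fun f : Module.End K V => f x) hS
    simp only [LinearMap.sub_apply, LinearMap.add_apply, LinearMap.smul_apply,
      Module.End.mul_apply, pow_succ, pow_zero, one_mul, Module.End.one_apply,
      LinearMap.zero_apply] at h0
    rw [C.qInt3] at h0
    simp only [hx', map_smul] at h0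
    have he2 : (C.q ^ 2 * C.th j) * C.th j + (C.q ^ 2 * C.th j) * (C.q⁻¹ ^ 2 * C.th j)
        + C.th j * (C.q⁻¹ ^ 2 * C.th j)
        = (C.q^2 + 1 + C.q⁻¹^2) * (C.th j * C.th j) := by
      linear_combination ((C.q * C.q⁻¹ + 1) * C.th j * C.th j) * hqq
    have he3 : (C.q ^ 2 * C.th j) * C.th j * (C.q⁻¹ ^ 2 * C.th j)
        = C.th j * (C.th j * C.th j) := by
      linear_combination ((C.q * C.q⁻¹ + 1) * C.th j * C.th j * C.th j) * hqq
    have hQ : C.Am (C.Am (C.Am (C.Asm x)))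
        - ((C.q ^ 2 * C.th j) + C.th j + (C.q⁻¹ ^ 2 * C.th j)) • C.Am (C.Am (C.Asm x))
        + ((C.q ^ 2 * C.th j) * C.th j + (C.q ^ 2 * C.th j) * (C.q⁻¹ ^ 2 * C.th j)
            + C.th j * (C.q⁻¹ ^ 2 * C.th j)) • C.Am (C.Asm x)
        - ((C.q ^ 2 * C.th j) * C.th j * (C.q⁻¹ ^ 2 * C.th j)) • C.Asm x = 0 := by
      rw [he2, he3]
      linear_combination (norm := module) h0
    simp only [LinearMap.sub_apply, LinearMap.smul_apply, Module.End.one_apply, map_sub, map_smul]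
    linear_combination (norm := module) hQ
  have hyT : C.Asm x ∈ (⨆ j, ⨆ (_ : j ≤ C.d), C.eigA j) := by
    rw [C.eigA_top]; exact Submodule.mem_top
  obtain ⟨z, hz, hrep⟩ := C.exists_rep C.eigA hyT
  have hPz : ∀ m, (C.Am - (C.q ^ 2 * C.th j) • (1 : Module.End K V))
      ((C.Am - C.th j • (1 : Module.End K V))
        ((C.Am - (C.q⁻¹ ^ 2 * C.th j) • (1 : Module.End K V)) (z m)))
      = ((C.th m - C.q ^ 2 * C.th j) * ((C.th m - C.th j)
          * (C.th m - C.q⁻¹ ^ 2 * C.th j))) • z m := by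
    intro m
    rw [C.eig_shiftA (hz m) (C.q⁻¹ ^ 2 * C.th j), map_smul, C.eig_shiftA (hz m) (C.th j),
      map_smul, map_smul, C.eig_shiftA (hz m) (C.q ^ 2 * C.th j), smul_smul, smul_smul]
    congr 1
    ring
  have hzero : ∀ m ∈ Finset.range (C.d + 1),
      ((C.th m - C.q ^ 2 * C.th j) * ((C.th m - C.th j)
        * (C.th m - C.q⁻¹ ^ 2 * C.th j))) • z m = 0 := by
    refine C.indepA (fun m => Submodule.smul_mem _ _ (hz m)) ?_
    calc ∑ m ∈ Finset.range (C.d + 1), ((C.th m - C.q ^ 2 * C.th j) * ((C.th m - C.th j)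
          * (C.th m - C.q⁻¹ ^ 2 * C.th j))) • z m
        = (C.Am - (C.q ^ 2 * C.th j) • (1 : Module.End K V))
            ((C.Am - C.th j • (1 : Module.End K V))
              ((C.Am - (C.q⁻¹ ^ 2 * C.th j) • (1 : Module.End K V))
                (∑ m ∈ Finset.range (C.d + 1), z m))) := by
          rw [map_sum, map_sum, map_sum]
          exact (Finset.sum_congr rfl fun m _ => (hPz m).symm)
    _ = 0 := by rw [← hrep]; exact hP
  rw [hrep]
  refine Submodule.sum_mem _ fun m hm => ?_
  rcases smul_eq_zero.mp (hzero m hm) with hcoef | hzm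
  · have hjm : m ≤ j + 1 := by
      by_contra hcon
      push_neg at hcon
      have hq2 : C.q ^ 2 = C.q ^ (2 : ℤ) := by norm_cast
      have hqi2 : C.q⁻¹ ^ 2 = C.q ^ (-2 : ℤ) := by
        rw [inv_pow, ← zpow_natCast, ← zpow_neg]
        norm_num
      rcases mul_eq_zero.mp hcoef with h1 | h12
      · have heq : C.th m = C.q ^ 2 * C.th j := sub_eq_zero.mp h1
        rw [th, th, hq2, ← zpow_add₀ C.hq] at heq
        have := C.zpow_inj heq
        omega
      rcases mul_eq_zero.mp h12 with h2 | h3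
      · have heq : C.th m = C.th j := sub_eq_zero.mp h2
        have := C.th_inj heq
        omega
      · have heq : C.th m = C.q⁻¹ ^ 2 * C.th j := sub_eq_zero.mp h3
        rw [th, th, hqi2, ← zpow_add₀ C.hq] at heq
        have := C.zpow_inj heq
        omega
    exact C.eigA_le_PhiA hjm (hz m)
  · rw [hzm]; exact Submodule.zero_mem _

end Serre

section DirA

lemma ff_eigAs {m : ℕ} (hm : 1 ≤ m) {x : V} (hx : x ∈ C.eigAs m) : C.ff x = 0 := by
  have h1 := C.ff_As_apply x
  rw [C.mem_eigAs.mp hx, map_smul, smul_eq_mul] at h1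
  have h2 : (C.ths m - C.ths 0) * C.ff x = 0 := by linear_combination h1
  have hne : C.ths m - C.ths 0 ≠ 0 := sub_ne_zero.mpr (C.ths_ne (by omega))
  exact (mul_eq_zero.mp h2).resolve_left hne

lemma PsiS1_ker : C.PsiS 1 ≤ LinearMap.ker C.ff :=
  iSup₂_le fun j hj x hx => LinearMap.mem_ker.mpr (C.ff_eigAs hj.1 hx)

lemma eigA0_le_span : C.eigA 0 ≤ Submodule.span K {C.vv} := by
  intro x hx
  rw [Submodule.mem_span_singleton]
  exact ⟨C.uc x, (C.kerA0 (C.mem_eigA.mp hx)).symm⟩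

lemma PhiA_zero : C.PhiA 0 ≤ C.eigA 0 := by
  refine iSup₂_le fun j hj => ?_
  have : j = 0 := by omega
  subst this
  exact le_rfl

lemma PsiS_d_le : C.PsiS C.d ≤ C.eigAs C.d := by
  refine iSup₂_le fun j hj => ?_
  have : j = C.d := by omega
  subst this
  exact le_rfl

lemma mapA_PhiA (k : ℕ) :
    Submodule.map (C.Am - C.th (k+1) • (1 : Module.End K V)) (C.PhiA (k+1)) ≤ C.PhiA k := by
  rw [PhiA, Submodule.map_iSup]
  refine iSup_le fun j => ?_
  rw [Submodule.map_iSup]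
  refine iSup_le fun hj => ?_
  rintro y ⟨x, hx, rfl⟩
  rw [C.eig_shiftA hx (C.th (k+1))]
  rcases eq_or_lt_of_le hj with hjk | hjk
  · rw [hjk, sub_self, zero_smul]; exact Submodule.zero_mem _
  · exact Submodule.smul_mem _ _ (C.eigA_le_PhiA (by omega) hx)

lemma mapAm_PsiS (hS2 : C.Asm ^ 3 * C.Am - qInt C.q 3 • (C.Asm ^ 2 * C.Am * C.Asm)
      + qInt C.q 3 • (C.Asm * C.Am * C.Asm ^ 2) - C.Am * C.Asm ^ 3 = 0) (k : ℕ) :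
    Submodule.map C.Am (C.PsiS k) ≤ C.PsiS (k - 1) := by
  rw [PsiS, Submodule.map_iSup]
  refine iSup_le fun j => ?_
  rw [Submodule.map_iSup]
  refine iSup_le fun hj => ?_
  rintro y ⟨x, hx, rfl⟩
  have := C.tridAs_weak hS2 hj.2 hx
  exact C.PsiS_anti (by omega) this

lemma mapAs_PsiS (k : ℕ) :
    Submodule.map (C.Asm - C.ths k • (1 : Module.End K V)) (C.PsiS k) ≤ C.PsiS (k + 1) := by
  rw [PsiS, Submodule.map_iSup]
  refine iSup_le fun j => ?_
  rw [Submodule.map_iSup]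
  refine iSup_le fun hj => ?_
  rintro y ⟨x, hx, rfl⟩
  rw [C.eig_shiftAs hx (C.ths k)]
  rcases eq_or_lt_of_le hj.1 with hjk | hjk
  · rw [← hjk, sub_self, zero_smul]; exact Submodule.zero_mem _
  · exact Submodule.smul_mem _ _ (C.eigAs_le_PsiS (by omega) hj.2 hx)

lemma mapAs_PhiA (hS1 : C.Am ^ 3 * C.Asm - qInt C.q 3 • (C.Am ^ 2 * C.Asm * C.Am)
      + qInt C.q 3 • (C.Am * C.Asm * C.Am ^ 2) - C.Asm * C.Am ^ 3 = 0)
    (k : ℕ) (hk : k ≤ C.d) :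
    Submodule.map (C.Asm - C.ths k • (1 : Module.End K V)) (C.PhiA k) ≤ C.PhiA (k + 1) := by
  rw [PhiA, Submodule.map_iSup]
  refine iSup_le fun j => ?_
  rw [Submodule.map_iSup]
  refine iSup_le fun hj => ?_
  rintro y ⟨x, hx, rfl⟩
  have hval : (C.Asm - C.ths k • (1 : Module.End K V)) x = C.Asm x - C.ths k • x := by
    rw [LinearMap.sub_apply, LinearMap.smul_apply, Module.End.one_apply]
  rw [hval]
  refine Submodule.sub_mem _ ?_ (Submodule.smul_mem _ _ (C.eigA_le_PhiA (by omega) hx))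
  have := C.tridA_weak hS1 (le_trans hj hk) hx
  exact C.PhiA_mono (by omega) this

/-- main necessity direction: if `ε = 0` then there is a nontrivial invariant subspace -/
lemma dirA (hS1 : C.Am ^ 3 * C.Asm - qInt C.q 3 • (C.Am ^ 2 * C.Asm * C.Am)
      + qInt C.q 3 • (C.Am * C.Asm * C.Am ^ 2) - C.Asm * C.Am ^ 3 = 0)
    (hS2 : C.Asm ^ 3 * C.Am - qInt C.q 3 • (C.Asm ^ 2 * C.Am * C.Asm)
      + qInt C.q 3 • (C.Asm * C.Am * C.Asm ^ 2) - C.Am * C.Asm ^ 3 = 0)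
    (hIrr : ∀ W : Submodule K V, Submodule.map C.Am W ≤ W → Submodule.map C.Asm W ≤ W →
      W = ⊥ ∨ W = ⊤)
    (heps : C.ff C.vv = 0) : False := by
  -- v lies in V*_1 + ... + V*_d
  have hvvPsi : C.vv ∈ C.PsiS 1 := by
    have hT : C.vv ∈ (⨆ j, ⨆ (_ : j ≤ C.d), C.eigAs j) := by
      rw [C.eigAs_top]; exact Submodule.mem_top
    obtain ⟨z, hz, hrep⟩ := C.exists_rep C.eigAs hT
    have hffz : C.ff (z 0) = 0 := by
      have h1 : C.ff C.vv = ∑ m ∈ Finset.range (C.d + 1), C.ff (z m) := by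
        rw [hrep, map_sum]
      rw [heps] at h1
      have h2 : ∑ m ∈ Finset.range (C.d + 1), C.ff (z m) = C.ff (z 0) := by
        refine Finset.sum_eq_single_of_mem 0 (Finset.mem_range.mpr (by omega)) ?_
        intro m _ hm
        exact C.ff_eigAs (by omega) (hz m)
      rw [h2] at h1
      exact h1.symm
    have hz0U : z 0 ∈ C.U 0 := C.kerAs0 (C.mem_eigAs.mp (hz 0))
    have hz0 : z 0 = 0 := by
      have := C.hucU0 (z 0) hz0U
      rw [← C.ff_U0 hz0U, hffz, zero_smul] at this
      exact this
    rw [hrep, Finset.sum_range_succ' z, hz0, add_zero]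
    refine Submodule.sum_mem _ fun m hm => ?_
    exact C.eigAs_le_PsiS (by omega) (by have := Finset.mem_range.mp hm; omega) (hz (m+1))
  -- the split sum S
  set Wk : ℕ → Submodule K V := fun k => C.PhiA k ⊓ C.PsiS k with hWk
  set S : Submodule K V := ⨆ k, ⨆ (_ : k ≤ C.d), Wk k with hS
  have hWk_le_S : ∀ k, k ≤ C.d → Wk k ≤ S := fun k hk =>
    le_iSup_of_le k (le_iSup_of_le hk le_rfl)
  -- S is A-invariant
  have hSA : Submodule.map C.Am S ≤ S := by
    rw [hS, Submodule.map_iSup]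
    refine iSup_le fun k => ?_
    rw [Submodule.map_iSup]
    refine iSup_le fun hk => ?_
    rintro y ⟨x, hx, rfl⟩
    cases k with
    | zero =>
        have hx0 : x ∈ C.eigA 0 := C.PhiA_zero hx.1
        rw [C.mem_eigA.mp hx0]
        exact hWk_le_S 0 (by omega) (Submodule.smul_mem _ _ hx)
    | succ n =>
        have hsplit : C.Am x = (C.Am - C.th (n+1) • (1 : Module.End K V)) x + C.th (n+1) • x := by
          rw [LinearMap.sub_apply, LinearMap.smul_apply, Module.End.one_apply]
          abel
        rw [hsplit]
        refine Submodule.add_mem _ ?_ (hWk_le_S (n+1) hk (Submodule.smul_mem _ _ hx))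
        refine hWk_le_S n (by omega) ⟨?_, ?_⟩
        · exact C.mapA_PhiA n (Submodule.mem_map_of_mem hx.1)
        · have h1 : (C.Am - C.th (n+1) • (1 : Module.End K V)) x = C.Am x - C.th (n+1) • x := by
            rw [LinearMap.sub_apply, LinearMap.smul_apply, Module.End.one_apply]
          rw [h1]
          refine Submodule.sub_mem _ ?_ (Submodule.smul_mem _ _ (C.PsiS_anti (by omega) hx.2))
          have := C.mapAm_PsiS hS2 (n+1) (Submodule.mem_map_of_mem hx.2)
          simpa using this
  -- S is A*-invariant
  have hSAs : Submodule.map C.Asm S ≤ S := by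
    rw [hS, Submodule.map_iSup]
    refine iSup_le fun k => ?_
    rw [Submodule.map_iSup]
    refine iSup_le fun hk => ?_
    rintro y ⟨x, hx, rfl⟩
    rcases eq_or_lt_of_le hk with hkd | hkd
    · subst hkd
      have hxd : x ∈ C.eigAs C.d := C.PsiS_d_le hx.2
      rw [C.mem_eigAs.mp hxd]
      exact hWk_le_S C.d le_rfl (Submodule.smul_mem _ _ hx)
    · have hsplit : C.Asm x = (C.Asm - C.ths k • (1 : Module.End K V)) x + C.ths k • x := by
        rw [LinearMap.sub_apply, LinearMap.smul_apply, Module.End.one_apply]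
        abel
      rw [hsplit]
      refine Submodule.add_mem _ ?_ (hWk_le_S k hk (Submodule.smul_mem _ _ hx))
      refine hWk_le_S (k+1) (by omega) ⟨?_, ?_⟩
      · exact C.mapAs_PhiA hS1 k hk (Submodule.mem_map_of_mem hx.1)
      · exact C.mapAs_PsiS k (Submodule.mem_map_of_mem hx.2)
  -- S is nonzero
  have hSne : S ≠ ⊥ := by
    obtain ⟨x, hxU, hxne⟩ := Submodule.exists_mem_ne_zero_of_ne_bot (C.hUne C.d le_rfl)
    have hwd : C.wAs C.d x ∈ C.eigAs C.d := C.wAs_eig le_rfl hxU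
    have hwdne : C.wAs C.d x ≠ 0 := by
      intro h0
      have := C.Ej_wAs hxU
      rw [h0, map_zero] at this
      exact hxne this.symm
    have hwdS : C.wAs C.d x ∈ S := by
      refine hWk_le_S C.d le_rfl ⟨?_, C.eigAs_le_PsiS le_rfl le_rfl hwd⟩
      rw [C.PhiA_d]
      exact Submodule.mem_top
    intro h0
    rw [h0] at hwdS
    exact hwdne (by simpa using hwdS)
  -- irreducibility gives S = ⊤
  have hStop : S = ⊤ := by
    rcases hIrr S hSA hSAs with h | h
    · exact absurd h hSne
    · exact h
  -- but S ≤ PsiS 1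
  have hSle : S ≤ C.PsiS 1 := by
    refine iSup₂_le fun k hk => ?_
    cases k with
    | zero =>
        refine le_trans (le_trans inf_le_left C.PhiA_zero) ?_
        refine le_trans C.eigA0_le_span ?_
        rw [Submodule.span_le, Set.singleton_subset_iff]
        exact hvvPsi
    | succ n => exact le_trans inf_le_right (C.PsiS_anti (by omega))
  have hu1 : C.u ∈ C.PsiS 1 := hSle (hStop ▸ Submodule.mem_top)
  have := LinearMap.mem_ker.mp (C.PsiS1_ker hu1)
  rw [C.ff_u] at this
  exact one_ne_zero this

end DirA

end Ctx
end TDAux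

/-- Proposition 12.1: assume moreover that `A, A*` satisfy the cubic `q`-Serre
relations, `dim U₀ = 1`, `Lⁱ Rⁱ` acts on `U₀` as the scalar `σ_i` for `0 ≤ i ≤ d`, and the only
subspaces of `V` invariant under each of `R, L, K` are `0` and `V`. Then `V` is irreducible under
the pair `A, A*` if and only if `∑ (−1)ⁱ σ_i qⁱ ([i]_q!)⁻² (q⁻¹(q − q⁻¹)⁻²)ⁱ ≠ 0`. -/
theorem statement14 {K : Type*} [Field K] [IsAlgClosed K] [CharZero K]
    (q : K) (hq : q ≠ 0) (hq1 : ∀ n : ℕ, 0 < n → q ^ n ≠ 1)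
    {V : Type*} [AddCommGroup V] [Module K V] [FiniteDimensional K V]
    (d : ℕ) (U : ℕ → Submodule K V) (R L A As : Module.End K V)
    (hsetup : TDSetup q d U R L A As)
    (Kop : Module.End K V)
    (hK : ∀ i, ∀ u ∈ U i, Kop u = q ^ (2 * (i : ℤ) - d) • u)
    (hserre : QSerre q A As)
    (hU0 : Module.finrank K (U 0) = 1)
    (σ : ℕ → K) (hσ : ∀ i, i ≤ d → ∀ u ∈ U 0, (L ^ i * R ^ i) u = σ i • u)
    (hBirr : ∀ W' : Submodule K V, Submodule.map R W' ≤ W' → Submodule.map L W' ≤ W' →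
      Submodule.map Kop W' ≤ W' → W' = ⊥ ∨ W' = ⊤) :
    (∀ W : Submodule K V, Submodule.map A W ≤ W → Submodule.map As W ≤ W →
        W = ⊥ ∨ W = ⊤) ↔
      ∑ i ∈ Finset.range (d + 1),
        (-1 : K) ^ i * σ i * q ^ i * ((qFac q i) ^ 2)⁻¹ *
          (q⁻¹ * ((q - q⁻¹) ^ 2)⁻¹) ^ i ≠ 0 := by
  obtain ⟨hdec, hRm, hLm, hL0, hAm, hAsm⟩ := hsetup
  obtain ⟨hUne, hUbot, htop, hdisj⟩ := hdec
  have hindep : iSupIndep U := hdisj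
  have hInternal : DirectSum.IsInternal U :=
    DirectSum.isInternal_submodule_of_iSupIndep_of_iSup_eq_top hindep htop
  letI dec : DirectSum.Decomposition U := hInternal.chooseDecomposition
  set E : ℕ → Module.End K V := fun i =>
    (U i).subtype ∘ₗ (DFinsupp.lapply i) ∘ₗ (DirectSum.decomposeLinearEquiv U).toLinearMap
    with hE
  have hE1 : ∀ i x, E i x ∈ U i := fun i x => (DirectSum.decompose U x i).2
  have hE2 : ∀ i, ∀ x ∈ U i, E i x = x := fun i x hx =>
    DirectSum.decompose_of_mem_same U hx
  have hE3 : ∀ i j, j ≠ i → ∀ x ∈ U j, E i x = 0 := fun i j hij x hx =>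
    DirectSum.decompose_of_mem_ne U hx hij
  obtain ⟨u, hu, hune⟩ := Submodule.exists_mem_ne_zero_of_ne_bot (hUne 0 (Nat.zero_le d))
  have hspan : Submodule.span K {u} = U 0 := by
    refine Submodule.eq_of_le_of_finrank_eq ?_ ?_
    · rw [Submodule.span_le, Set.singleton_subset_iff]; exact hu
    · rw [finrank_span_singleton hune, hU0]
  have hmemspan : ∀ x, E 0 x ∈ Submodule.span K ({u} : Set V) := by
    intro x; rw [hspan]; exact hE1 0 x
  set uc : V →ₗ[K] K :=
    (LinearEquiv.toSpanNonzeroSingleton K V u hune).symm.toLinearMap ∘ₗ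
      (LinearMap.codRestrict (Submodule.span K {u}) (E 0) hmemspan) with huc
  have hucapp : ∀ x, uc x
      = (LinearEquiv.toSpanNonzeroSingleton K V u hune).symm ⟨E 0 x, hmemspan x⟩ :=
    fun x => rfl
  have hucu : uc u = 1 := by
    rw [hucapp]
    have h1 : (⟨E 0 u, hmemspan u⟩ : Submodule.span K ({u} : Set V))
        = ⟨u, Submodule.mem_span_singleton_self u⟩ := Subtype.ext (hE2 0 u hu)
    rw [h1]
    exact LinearEquiv.coord_self K V u hune
  have hucU0 : ∀ x ∈ U 0, x = uc x • u := by
    intro x hx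
    have hx' : x ∈ Submodule.span K ({u} : Set V) := by rw [hspan]; exact hx
    have h1 : (⟨E 0 x, hmemspan x⟩ : Submodule.span K ({u} : Set V)) = ⟨x, hx'⟩ :=
      Subtype.ext (hE2 0 x hx)
    rw [hucapp, h1]
    exact (LinearEquiv.coord_apply_smul K V u hune ⟨x, hx'⟩).symm
  have hucE : ∀ j, j ≠ 0 → ∀ x ∈ U j, uc x = 0 := by
    intro j hj x hx
    rw [hucapp]
    have h1 : (⟨E 0 x, hmemspan x⟩ : Submodule.span K ({u} : Set V)) = 0 :=
      Subtype.ext (hE3 0 j hj x hx)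
    rw [h1, map_zero]
  set C : TDAux.Ctx K V :=
    { q := q, d := d, U := U, Rm := R, Lm := L, Am := A, Asm := As, E := E, u := u, uc := uc,
      hq := hq, hq1 := hq1, hUne := hUne, hUbot := hUbot, htop := htop, hR := hRm, hL := hLm,
      hL0 := hL0, hA := hAm, hAs := hAsm, hE1 := hE1, hE2 := hE2, hE3 := hE3, hu := hu,
      hune := hune, hucu := hucu, hucU0 := hucU0, hucE := hucE } with hC
  have hffvv : C.ff C.vv = ∑ i ∈ Finset.range (d + 1),
      (-1 : K) ^ i * σ i * q ^ i * ((qFac q i) ^ 2)⁻¹ *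
        (q⁻¹ * ((q - q⁻¹) ^ 2)⁻¹) ^ i :=
    C.ff_vv σ (fun i hi x hx => hσ i hi x hx)
  constructor
  · intro hIrr heq
    exact C.dirA hserre.1 hserre.2 hIrr (by rw [hffvv]; exact heq)
  · intro hne W hW1 hW2
    by_cases hbot : W = ⊥
    · left; exact hbot
    · right
      exact C.dirB Kop (fun i x hx => hK i x hx) hBirr
        (by rw [hffvv]; exact hne) W hW1 hW2 hbot
end
end
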